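/- arXiv:2207.11424 — 2 statements merged into one kernel-verified Lean document; each statement's English description precedes it below -/
import Mathlib

section
/- Let r, s > 1 and α ∈ (0, N) satisfy 1/r + 1/s + (N−α)/N = 2. Then there is a constant C = C(r, s, α, c₂, C₁, C₂) > 0 such that for all f ∈ ℓ^r(G) and g ∈ ℓ^s(G), the discrete Hardy–Littlewood–Sobolev inequality holds: ∑_{x,y ∈ G, x ≠ y} R_α(x,y)·|f(x)|·|g(y)| ≤ C·‖f‖_r·‖g‖_s. -/
open Filter Topology

noncomputable section

namespace Choquard

open scoped ENNReal NNReal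

variable {G : Type*}

/-- The word metric on the Cayley graph of `(G, S)`: the least `k` such that
`y = x * s₁ * ⋯ * s_k` with each `sᵢ ∈ S`. -/
def wordDist [Group G] (S : Finset G) (x y : G) : ℕ :=
  sInf {k : ℕ | ∃ l : List G, (∀ s ∈ l, s ∈ S) ∧ l.length = k ∧ y = x * l.prod}

/-- Convolution against a kernel: `(R ∗ f)(x) = ∑_{y ∈ G} R(x,y) f(y)`. -/
def conv (R : G → G → ℝ) (f : G → ℝ) (x : G) : ℝ := ∑' y, R x y * f y

/-- The `ℓ^q(G)` norm of `u`. -/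
def lpNorm (q : ℝ) (u : G → ℝ) : ℝ := (∑' x, |u x| ^ q) ^ (1 / q)

/-- `u ∈ ℓ^q(G)`. -/
def Memlp (q : ℝ) (u : G → ℝ) : Prop := Summable fun x : G => |u x| ^ q

/-- `|∇u(x)|_p^p = ∑_{y ∼ x} |u(y) − u(x)|^p`, where `y ∼ x` iff `y = x * s`, `s ∈ S`. -/
def gradP [Group G] (S : Finset G) (p : ℝ) (u : G → ℝ) (x : G) : ℝ :=
  ∑ s ∈ S, |u (x * s) - u x| ^ p

/-- The `D^{1,p}` norm `(∑_x ∑_{y ∼ x} |u(y) − u(x)|^p)^{1/p}`. -/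
def D1Norm [Group G] (S : Finset G) (p : ℝ) (u : G → ℝ) : ℝ :=
  (∑' x, gradP S p u x) ^ (1 / p)

/-- `u ∈ D^{1,p}(G) = {u ∈ ℓ^{Np/(N−p)}(G) : ‖u‖_{D^{1,p}} < ∞}`. -/
def MemD1p [Group G] (S : Finset G) (N : ℕ) (p : ℝ) (u : G → ℝ) : Prop :=
  Memlp ((N : ℝ) * p / ((N : ℝ) - p)) u ∧ Summable (gradP S p u)

/-- `|∇u(x)|₂² = ∑_{y ∼ x} (u(y) − u(x))²`. -/
def gradSq [Group G] (S : Finset G) (u : G → ℝ) (x : G) : ℝ :=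
  ∑ s ∈ S, (u (x * s) - u x) ^ 2

/-- The `D^{1,2}` norm. -/
def D12Norm [Group G] (S : Finset G) (u : G → ℝ) : ℝ :=
  (∑' x, gradSq S u x) ^ ((1 : ℝ) / 2)

/-- `u ∈ D^{1,2}(G) = {u ∈ ℓ^{2N/(N−2)}(G) : ‖u‖_{D^{1,2}} < ∞}`. -/
def MemD12 [Group G] (S : Finset G) (N : ℕ) (u : G → ℝ) : Prop :=
  Memlp (2 * (N : ℝ) / ((N : ℝ) - 2)) u ∧ Summable (gradSq S u)

/-- The graph Laplacian `Δu(x) = ∑_{y ∼ x} (u(y) − u(x))`. -/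
def lap [Group G] (S : Finset G) (u : G → ℝ) (x : G) : ℝ :=
  ∑ s ∈ S, (u (x * s) - u x)

/-- `u ∈ D^{2,2}(G) = {u ∈ ℓ^{2N/(N−4)}(G) : ‖Δu‖_{ℓ²} < ∞}`. -/
def MemD22 [Group G] (S : Finset G) (N : ℕ) (u : G → ℝ) : Prop :=
  Memlp (2 * (N : ℝ) / ((N : ℝ) - 4)) u ∧ Summable fun x => (lap S u x) ^ 2

/-- `u ∈ D^{2,p}(G) = {u ∈ ℓ^{Np/(N−2p)}(G) : ‖Δu‖_{ℓ^p} < ∞}`. -/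
def MemD2p [Group G] (S : Finset G) (N : ℕ) (p : ℝ) (u : G → ℝ) : Prop :=
  Memlp ((N : ℝ) * p / ((N : ℝ) - 2 * p)) u ∧ Summable fun x => |lap S u x| ^ p

/-- The nonlocal energy `∑_{x ∈ G} (R_α ∗ |u|^p)(x) |u(x)|^p`. -/
def energy (R : G → G → ℝ) (p : ℝ) (u : G → ℝ) : ℝ :=
  ∑' x, conv R (fun y => |u y| ^ p) x * |u x| ^ p

/-- The optimal constant `K` of the Sobolev-type inequality. -/
def bestK [Group G] (S : Finset G) (N : ℕ) (R : G → G → ℝ) (p : ℝ) : ℝ :=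
  sSup {t : ℝ | ∃ u : G → ℝ, MemD12 S N u ∧ D12Norm S u = 1 ∧ t = energy R p u}

/-- The discrete `p`-Laplacian. -/
def pLap [Group G] (S : Finset G) (p : ℝ) (u : G → ℝ) (x : G) : ℝ :=
  ∑ s ∈ S, |u (x * s) - u x| ^ (p - 2) * (u (x * s) - u x)

/-- The cutoff `Ψ_r`, the indicator of `{x : d(x,e) ≥ r + 1}`. -/
def cutoff [Group G] (S : Finset G) (r : ℕ) (x : G) : ℝ :=
  if r + 1 ≤ wordDist S 1 x then 1 else 0


section AuxHLS


lemma aux_tsum_le_toReal {ι : Type*} (f : ι → ℝ) (hf : ∀ i, 0 ≤ f i)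
    {L : ℝ≥0∞} (hL : L ≠ ⊤) (h : ∑' i, ENNReal.ofReal (f i) ≤ L) :
    ∑' i, f i ≤ L.toReal := by
  by_cases hs : Summable f
  · have h1 : ENNReal.ofReal (∑' i, f i) ≤ L := by
      rw [ENNReal.ofReal_tsum_of_nonneg hf hs]; exact h
    have h2 := ENNReal.toReal_mono hL h1
    rwa [ENNReal.toReal_ofReal (tsum_nonneg hf)] at h2
  · rw [tsum_eq_zero_of_not_summable hs]
    exact ENNReal.toReal_nonneg

lemma ennreal_tsum_le_of_sum_le {ι : Type*} {f : ι → ℝ≥0∞} {c : ℝ≥0∞}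
    (h : ∀ s : Finset ι, ∑ i ∈ s, f i ≤ c) : ∑' i, f i ≤ c := by
  rw [ENNReal.tsum_eq_iSup_sum]; exact iSup_le h

lemma head_geom_le {q : ℝ} (h1 : 1 < q) (n : ℕ) :
    ∑ j ∈ Finset.range n, q ^ j ≤ q ^ n / (q - 1) := by
  rw [geom_sum_eq (ne_of_gt h1)]
  have hq : 0 < q - 1 := by linarith
  apply div_le_div_of_nonneg_right ?_ hq.le
  linarith [pow_nonneg (by linarith : (0:ℝ) ≤ q) n]

lemma tail_geom_sum_le {q : ℝ} (h0 : 0 ≤ q) (h1 : q < 1) (J : ℕ) :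
    ∑ j ∈ Finset.range J, q ^ j ≤ (1 - q)⁻¹ := by
  have hq1 : q ≠ 1 := ne_of_lt h1
  rw [geom_sum_eq hq1]
  have h2 : 0 < 1 - q := by linarith
  have h3 : (q ^ J - 1) / (q - 1) = (1 - q ^ J) / (1 - q) := by
    rw [div_eq_div_iff (by linarith) (by linarith)]; ring
  rw [h3, div_eq_mul_inv]
  have h4 : 1 - q ^ J ≤ 1 := by
    have := pow_nonneg h0 J; linarith
  calc (1 - q ^ J) * (1 - q)⁻¹ ≤ 1 * (1 - q)⁻¹ :=
        mul_le_mul_of_nonneg_right h4 (by positivity)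
    _ = (1 - q)⁻¹ := one_mul _

lemma tail_geom_le {q : ℝ} (h0 : 0 ≤ q) (h1 : q < 1) (J M : ℕ) :
    ∑ j ∈ (Finset.range J).filter (fun j => M ≤ j), q ^ j ≤ q ^ M * (1 - q)⁻¹ := by
  have step1 : ∑ j ∈ (Finset.range J).filter (fun j => M ≤ j), q ^ j
      = q ^ M * ∑ j ∈ (Finset.range J).filter (fun j => M ≤ j), q ^ (j - M) := by
    rw [Finset.mul_sum]
    apply Finset.sum_congr rfl
    intro j hj
    simp only [Finset.mem_filter, Finset.mem_range] at hj
    rw [← pow_add]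
    congr 1
    omega
  rw [step1]
  apply mul_le_mul_of_nonneg_left ?_ (pow_nonneg h0 M)
  have step2 : ∑ j ∈ (Finset.range J).filter (fun j => M ≤ j), q ^ (j - M)
      = ∑ k ∈ ((Finset.range J).filter (fun j => M ≤ j)).image (fun j => j - M), q ^ k := by
    rw [Finset.sum_image]
    intro i hi j hj hij
    simp only [Finset.mem_coe, Finset.mem_filter, Finset.mem_range] at hi hj hij
    omega
  rw [step2]
  calc _ ≤ ∑ k ∈ Finset.range J, q ^ k := by
        apply Finset.sum_le_sum_of_subset_of_nonneg
        · intro k hk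
          simp only [Finset.mem_image, Finset.mem_filter, Finset.mem_range] at hk ⊢
          obtain ⟨j, ⟨hjJ, _⟩, rfl⟩ := hk
          omega
        · intro k _ _; exact pow_nonneg h0 k
    _ ≤ (1 - q)⁻¹ := tail_geom_sum_le h0 h1 J

lemma geomZ {t c : ℝ} (ht : 0 < t) (hc : 0 < c) (u : ℝ) :
    ∑' n : ℤ, (if (n : ℝ) * t ≤ u then (2 : ℝ≥0∞) ^ (((n : ℝ) * t - u) * c) else 0) ≤
      (1 - (2 : ℝ≥0∞) ^ (-(t * c)))⁻¹ := by
  set q : ℝ≥0∞ := (2 : ℝ≥0∞) ^ (-(t * c)) with hq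
  set n₀ : ℤ := ⌊u / t⌋ with hn₀
  have hfl : (n₀ : ℝ) * t ≤ u := by
    have := Int.floor_le (u / t)
    calc (n₀ : ℝ) * t ≤ (u / t) * t := by
          apply mul_le_mul_of_nonneg_right this ht.le
      _ = u := by field_simp
  have hbound : ∀ n : ℤ, (if (n : ℝ) * t ≤ u then (2 : ℝ≥0∞) ^ (((n : ℝ) * t - u) * c) else 0)
      ≤ (if n ≤ n₀ then q ^ (n₀ - n).toNat else 0) := by
    intro n
    by_cases hn : (n : ℝ) * t ≤ u
    · have hle : n ≤ n₀ := by
        rw [hn₀]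
        apply Int.le_floor.mpr
        rw [le_div_iff₀ ht]
        exact hn
      simp only [hn, if_pos, hle]
      have hk : ((n₀ - n).toNat : ℝ) = (n₀ : ℝ) - (n : ℝ) := by
        have h0 : (0:ℤ) ≤ n₀ - n := by omega
        rw [← Int.cast_natCast (R := ℝ), Int.toNat_of_nonneg h0]
        push_cast; ring
      rw [hq, ← ENNReal.rpow_natCast, ← ENNReal.rpow_mul]
      apply ENNReal.rpow_le_rpow_of_exponent_le (by norm_num)
      rw [hk]
      have hnn : (n : ℝ) ≤ (n₀ : ℝ) := by exact_mod_cast hle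
      nlinarith
    · simp [hn]
  calc ∑' n : ℤ, (if (n : ℝ) * t ≤ u then (2 : ℝ≥0∞) ^ (((n : ℝ) * t - u) * c) else 0)
      ≤ ∑' n : ℤ, (if n ≤ n₀ then q ^ (n₀ - n).toNat else 0) := ENNReal.tsum_le_tsum hbound
    _ ≤ (1 - q)⁻¹ := by
        apply ennreal_tsum_le_of_sum_le
        intro s
        rw [← Finset.sum_filter]
        have himg : ∑ n ∈ s.filter (fun n => n ≤ n₀), q ^ (n₀ - n).toNat
            = ∑ k ∈ (s.filter (fun n => n ≤ n₀)).image (fun n => (n₀ - n).toNat), q ^ k := by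
          rw [Finset.sum_image]
          intro i hi j hj hij
          simp only [Finset.mem_coe, Finset.mem_filter] at hi hj hij
          omega
        rw [himg]
        calc _ ≤ ∑' k : ℕ, q ^ k := ENNReal.sum_le_tsum _
          _ = (1 - q)⁻¹ := ENNReal.tsum_geometric q





variable {G : Type*} [Group G]

lemma wordDist_inv_mul (S : Finset G) (x y : G) :
    wordDist S x y = wordDist S 1 (x⁻¹ * y) := by
  unfold wordDist
  congr 1
  ext k
  constructor
  · rintro ⟨l, h1, h2, h3⟩
    exact ⟨l, h1, h2, by rw [one_mul, h3, inv_mul_cancel_left]⟩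
  · rintro ⟨l, h1, h2, h3⟩
    rw [one_mul] at h3
    exact ⟨l, h1, h2, by rw [← h3, mul_inv_cancel_left]⟩

lemma wordDist_symm (S : Finset G) (hsym : ∀ s ∈ S, s⁻¹ ∈ S) (x y : G) :
    wordDist S x y = wordDist S y x := by
  have key : ∀ a b : G,
      {k : ℕ | ∃ l : List G, (∀ s ∈ l, s ∈ S) ∧ l.length = k ∧ b = a * l.prod} ⊆
      {k : ℕ | ∃ l : List G, (∀ s ∈ l, s ∈ S) ∧ l.length = k ∧ a = b * l.prod} := by
    rintro a b k ⟨l, h1, h2, h3⟩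
    refine ⟨(l.map fun z => z⁻¹).reverse, ?_, by simp [h2], ?_⟩
    · intro s hs
      simp only [List.mem_reverse, List.mem_map] at hs
      obtain ⟨t, ht, rfl⟩ := hs
      exact hsym t (h1 t ht)
    · rw [← List.prod_inv_reverse, h3, mul_assoc]
      simp
  unfold wordDist
  congr 1
  exact Set.Subset.antisymm (key x y) (key y x)

lemma wordDist_self (S : Finset G) (x : G) : wordDist S x x = 0 := by
  unfold wordDist
  have : 0 ∈ {k : ℕ | ∃ l : List G, (∀ s ∈ l, s ∈ S) ∧ l.length = k ∧ x = x * l.prod} :=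
    ⟨[], by simp, by simp, by simp⟩
  exact Nat.eq_zero_of_le_zero (Nat.sInf_le this)

lemma ball_card_le (S : Finset G) {N : ℕ} {C₁ C₂ : ℝ} (hC₁ : 0 < C₁)
    (hgrowth : ∀ n : ℕ, 1 ≤ n →
      C₁ * (n : ℝ) ^ N ≤ (Nat.card {x : G // wordDist S 1 x ≤ n} : ℝ) ∧
      (Nat.card {x : G // wordDist S 1 x ≤ n} : ℝ) ≤ C₂ * (n : ℝ) ^ N)
    [DecidableEq G]
    (x : G) {t : ℕ} (ht : 1 ≤ t) (U : Finset G) (hU : ∀ y ∈ U, wordDist S x y ≤ t) :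
    (U.card : ℝ) ≤ C₂ * (t : ℝ) ^ N := by
  have hfin : (Finite {z : G // wordDist S 1 z ≤ t}) := by
    by_contra hinf
    rw [not_finite_iff_infinite] at hinf
    have h0 : Nat.card {z : G // wordDist S 1 z ≤ t} = 0 := Nat.card_eq_zero_of_infinite
    have := (hgrowth t ht).1
    rw [h0] at this
    norm_num at this
    nlinarith [pow_pos (by exact_mod_cast Nat.lt_of_lt_of_le Nat.zero_lt_one ht : (0:ℝ) < t) N]
  have hsetfin : {z : G | wordDist S 1 z ≤ t}.Finite := by
    rw [← Set.finite_coe_iff]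
    exact hfin
  have hcard : (hsetfin.toFinset.card : ℝ) = (Nat.card {z : G // wordDist S 1 z ≤ t} : ℝ) := by
    congr 1
    exact (Nat.card_eq_card_finite_toFinset hsetfin).symm
  have hsub : U.image (fun y => x⁻¹ * y) ⊆ hsetfin.toFinset := by
    intro z hz
    simp only [Finset.mem_image] at hz
    obtain ⟨y, hy, rfl⟩ := hz
    rw [Set.Finite.mem_toFinset]
    show wordDist S 1 (x⁻¹ * y) ≤ t
    rw [← wordDist_inv_mul]
    exact hU y hy
  have hinj : (U.image (fun y => x⁻¹ * y)).card = U.card :=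
    Finset.card_image_of_injective U (fun a b h => by
      simpa using mul_left_cancel h)
  calc (U.card : ℝ) = ((U.image (fun y => x⁻¹ * y)).card : ℝ) := by rw [hinj]
    _ ≤ (hsetfin.toFinset.card : ℝ) := by exact_mod_cast Finset.card_le_card hsub
    _ = (Nat.card {z : G // wordDist S 1 z ≤ t} : ℝ) := hcard
    _ ≤ C₂ * (t : ℝ) ^ N := (hgrowth t ht).2


section Kernel
variable [Group G] [DecidableEq G]

/-- Key counting estimate: the Riesz kernel summed over any finite set `T` is
controlled by `#T ^ (α/N)`. -/
lemma kernel_sum_le (S : Finset G) {N : ℕ} (hN : 3 ≤ N) {C₁ C₂ : ℝ} (hC₁ : 0 < C₁) (hC₂ : 0 < C₂)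
    (hgrowth : ∀ n : ℕ, 1 ≤ n →
      C₁ * (n : ℝ) ^ N ≤ (Nat.card {x : G // wordDist S 1 x ≤ n} : ℝ) ∧
      (Nat.card {x : G // wordDist S 1 x ≤ n} : ℝ) ≤ C₂ * (n : ℝ) ^ N)
    {α : ℝ} (hα : 0 < α) (hαN : α < N)
    (x : G) (T : Finset G) :
    ∑ y ∈ T, (if wordDist S x y = 0 then (0:ℝ) else (wordDist S x y : ℝ) ^ (α - (N:ℝ)))
      ≤ (C₂ * 2 ^ N * ((2:ℝ) ^ α / ((2:ℝ) ^ α - 1)) + (1 - (2:ℝ) ^ (α - (N:ℝ)))⁻¹)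
        * (T.card : ℝ) ^ (α / (N:ℝ)) := by
  have hN0 : (0:ℝ) < (N:ℝ) := by positivity
  have h2α : (1:ℝ) < (2:ℝ) ^ α := Real.one_lt_rpow_iff_of_pos (by norm_num) |>.mpr (Or.inl ⟨by norm_num, hα⟩)
  have hqlt : (2:ℝ) ^ (α - (N:ℝ)) < 1 :=
    Real.rpow_lt_one_of_one_lt_of_neg (by norm_num) (by linarith)
  have hqpos : (0:ℝ) < (2:ℝ) ^ (α - (N:ℝ)) := Real.rpow_pos_of_pos (by norm_num) _
  have hCpos : (0:ℝ) < C₂ * 2 ^ N * ((2:ℝ) ^ α / ((2:ℝ) ^ α - 1)) + (1 - (2:ℝ) ^ (α - (N:ℝ)))⁻¹ := by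
    have : (0:ℝ) < (2:ℝ)^α / ((2:ℝ)^α - 1) := div_pos (by positivity) (by linarith)
    have h2 : (0:ℝ) < (1 - (2:ℝ) ^ (α - (N:ℝ)))⁻¹ := by
      apply inv_pos.mpr; linarith
    positivity
  -- trivial case T = ∅
  rcases Nat.eq_zero_or_pos T.card with hb0 | hbpos
  · rw [Finset.card_eq_zero] at hb0
    subst hb0
    simp only [Finset.sum_empty, Finset.card_empty, Nat.cast_zero]
    rw [Real.zero_rpow (by positivity : α / (N:ℝ) ≠ 0)]
    simp
  have hbR : (0:ℝ) < (T.card : ℝ) := by exact_mod_cast hbpos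
  have hbne : T.card ≠ 0 := Nat.pos_iff_ne_zero.mp hbpos
  set b := T.card with hbdef
  -- restrict to nonzero distances
  set D := T.filter (fun y => wordDist S x y ≠ 0) with hD
  have hsum0 : ∑ y ∈ T, (if wordDist S x y = 0 then (0:ℝ) else (wordDist S x y : ℝ) ^ (α - (N:ℝ)))
      = ∑ y ∈ D, (wordDist S x y : ℝ) ^ (α - (N:ℝ)) := by
    rw [hD, ← Finset.sum_filter_of_ne (p := fun y => wordDist S x y ≠ 0)]
    · apply Finset.sum_congr rfl
      intro y hy
      simp only [Finset.mem_filter] at hy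
      rw [if_neg hy.2]
    · intro y _ hne
      intro h0
      exact hne (by rw [if_pos h0])
  rw [hsum0]
  -- helper conversions between rpow and npow
  have hpow : ∀ (y:ℝ) (j:ℕ), ((2:ℝ)^y)^j = (2:ℝ)^(y*(j:ℝ)) := fun y j => by
    rw [← Real.rpow_natCast ((2:ℝ)^y) j, ← Real.rpow_mul (by norm_num)]
  have hnpow : ∀ j:ℕ, ((2:ℝ)^j) = (2:ℝ)^((j:ℕ):ℝ) := fun j => (Real.rpow_natCast 2 j).symm
  set q : ℝ := (2:ℝ) ^ (α - (N:ℝ)) with hqdef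
  -- fiber decomposition along dyadic scales
  set dd : G → ℕ := fun y => wordDist S x y with hdd
  set J : ℕ := D.sup dd + 1 with hJ
  have hmaps : ∀ y ∈ D, Nat.log 2 (dd y) ∈ Finset.range J := by
    intro y hy
    rw [Finset.mem_range, hJ]
    have h1 : Nat.log 2 (dd y) ≤ dd y := Nat.log_le_self 2 (dd y)
    have h2 : dd y ≤ D.sup dd := Finset.le_sup hy
    omega
  rw [← Finset.sum_fiberwise_of_maps_to hmaps (fun y => (dd y : ℝ) ^ (α - (N:ℝ)))]
  -- the per-fiber bound
  have hfiber : ∀ j ∈ Finset.range J,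
      ∑ y ∈ D.filter (fun y => Nat.log 2 (dd y) = j), (dd y : ℝ) ^ (α - (N:ℝ))
        ≤ ((D.filter (fun y => Nat.log 2 (dd y) = j)).card : ℝ) * q ^ j := by
    intro j _
    apply (Finset.sum_le_card_nsmul _ _ (q ^ j) ?_).trans_eq (by rw [nsmul_eq_mul])
    intro y hy
    simp only [Finset.mem_filter, hD] at hy
    obtain ⟨⟨hyT, hdne⟩, hlog⟩ := hy
    have hd1 : 2 ^ j ≤ dd y := by
      rw [← hlog]; exact Nat.pow_log_le_self 2 hdne
    have : (dd y : ℝ) ^ (α - (N:ℝ)) ≤ ((2 ^ j : ℕ) : ℝ) ^ (α - (N:ℝ)) := by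
      apply Real.rpow_le_rpow_of_nonpos (by positivity) (by exact_mod_cast hd1) (by linarith)
    apply this.trans_eq
    push_cast
    rw [hnpow, ← Real.rpow_mul (by norm_num), mul_comm ((j:ℕ):ℝ), hqdef,
      ← hpow (α - (N:ℝ)) j]
  -- cardinality bounds for fibers
  have hcard_near : ∀ j : ℕ,
      ((D.filter (fun y => Nat.log 2 (dd y) = j)).card : ℝ) ≤ C₂ * ((2:ℝ)^(j+1)) ^ N := by
    intro j
    have ht1 : 1 ≤ 2 ^ (j+1) - 1 := by
      have : 2 ≤ 2 ^ (j+1) := by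
        calc 2 = 2^1 := (pow_one 2).symm
        _ ≤ 2 ^ (j+1) := Nat.pow_le_pow_right (by norm_num) (by omega)
      omega
    have hU : ∀ y ∈ D.filter (fun y => Nat.log 2 (dd y) = j), wordDist S x y ≤ 2 ^ (j+1) - 1 := by
      intro y hy
      simp only [Finset.mem_filter, hD] at hy
      obtain ⟨⟨hyT, hdne⟩, hlog⟩ := hy
      have : dd y < 2 ^ (j+1) := by
        rw [← hlog]
        exact Nat.lt_pow_succ_log_self (by norm_num) (dd y)
      have hddy : wordDist S x y = dd y := rfl
      omega
    have := ball_card_le S hC₁ hgrowth x ht1 _ hU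
    apply this.trans
    apply mul_le_mul_of_nonneg_left ?_ hC₂.le
    apply pow_le_pow_left₀ (by positivity)
    have : ((2 ^ (j+1) - 1 : ℕ) : ℝ) ≤ ((2 ^ (j+1) : ℕ) : ℝ) := by
      exact_mod_cast Nat.sub_le _ 1
    apply this.trans_eq
    push_cast
    ring
  have hcard_far : ∀ j : ℕ,
      ((D.filter (fun y => Nat.log 2 (dd y) = j)).card : ℝ) ≤ (b : ℝ) := by
    intro j
    have : (D.filter (fun y => Nat.log 2 (dd y) = j)) ⊆ T :=
      (Finset.filter_subset _ _).trans (by rw [hD]; exact Finset.filter_subset _ _)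
    exact_mod_cast Finset.card_le_card this
  -- split the scale sum
  have hsplit := Finset.sum_filter_add_sum_filter_not (Finset.range J)
    (fun j => 2 ^ (j * N) ≤ b)
    (fun j => ∑ y ∈ D.filter (fun y => Nat.log 2 (dd y) = j), (dd y : ℝ) ^ (α - (N:ℝ)))
  rw [← hsplit]
  set L : ℕ := Nat.log 2 b / N with hL
  set M : ℕ := Nat.log 2 b / N + 1 with hM
  have hNpos : 0 < N := by omega
  -- near part
  have hnear : ∑ j ∈ (Finset.range J).filter (fun j => 2 ^ (j * N) ≤ b),
      (∑ y ∈ D.filter (fun y => Nat.log 2 (dd y) = j), (dd y : ℝ) ^ (α - (N:ℝ)))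
      ≤ C₂ * 2 ^ N * ((2:ℝ) ^ α / ((2:ℝ) ^ α - 1)) * (b : ℝ) ^ (α / (N:ℝ)) := by
    calc ∑ j ∈ (Finset.range J).filter (fun j => 2 ^ (j * N) ≤ b),
        (∑ y ∈ D.filter (fun y => Nat.log 2 (dd y) = j), (dd y : ℝ) ^ (α - (N:ℝ)))
        ≤ ∑ j ∈ (Finset.range J).filter (fun j => 2 ^ (j * N) ≤ b),
            C₂ * 2 ^ N * ((2:ℝ)^α) ^ j := by
          apply Finset.sum_le_sum
          intro j hj
          simp only [Finset.mem_filter, Finset.mem_range] at hj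
          refine ((hfiber j (Finset.mem_range.mpr hj.1)).trans ?_)
          calc ((D.filter (fun y => Nat.log 2 (dd y) = j)).card : ℝ) * q ^ j
              ≤ (C₂ * ((2:ℝ)^(j+1)) ^ N) * q ^ j := by
                apply mul_le_mul_of_nonneg_right (hcard_near j) (by positivity)
            _ = C₂ * 2 ^ N * ((2:ℝ)^α) ^ j := by
                rw [hqdef, hpow (α - (N:ℝ)) j, hpow α j, ← pow_mul, hnpow ((j+1)*N), hnpow N,
                  mul_assoc, ← Real.rpow_add (by norm_num), mul_assoc,
                  ← Real.rpow_add (by norm_num)]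
                congr 1
                push_cast
                ring
      _ ≤ ∑ j ∈ Finset.range (L + 1), C₂ * 2 ^ N * ((2:ℝ)^α) ^ j := by
          apply Finset.sum_le_sum_of_subset_of_nonneg
          · intro j hj
            simp only [Finset.mem_filter, Finset.mem_range] at hj ⊢
            have hlog : j * N ≤ Nat.log 2 b := (Nat.le_log_iff_pow_le (by norm_num) hbne).mpr hj.2
            have : j ≤ L := by
              rw [hL]
              calc j = j * N / N := by rw [Nat.mul_div_cancel j hNpos]
                _ ≤ Nat.log 2 b / N := Nat.div_le_div_right hlog
            omega
          · intro j _ _; positivity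
      _ = C₂ * 2 ^ N * ∑ j ∈ Finset.range (L + 1), ((2:ℝ)^α) ^ j := by
          rw [Finset.mul_sum]
      _ ≤ C₂ * 2 ^ N * (((2:ℝ)^α) ^ (L+1) / ((2:ℝ)^α - 1)) := by
          apply mul_le_mul_of_nonneg_left (head_geom_le h2α (L+1)) (by positivity)
      _ ≤ C₂ * 2 ^ N * ((b : ℝ) ^ (α / (N:ℝ)) * (2:ℝ) ^ α / ((2:ℝ)^α - 1)) := by
          have hLb : ((2:ℝ)^α) ^ L ≤ (b:ℝ) ^ (α / (N:ℝ)) := by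
            have h1 : ((2:ℝ)^α) ^ L = ((2:ℝ)^((L*N : ℕ):ℝ)) ^ (α / (N:ℝ)) := by
              rw [hpow α L, ← Real.rpow_mul (by norm_num)]
              congr 1
              push_cast
              field_simp
              try ring
            rw [h1]
            have h2 : (2:ℝ)^((L*N : ℕ):ℝ) ≤ (b : ℝ) := by
              rw [← hnpow (L*N)]
              have : (2:ℕ)^(L*N) ≤ b := by
                calc (2:ℕ)^(L*N) ≤ 2 ^ (Nat.log 2 b) := by
                      apply Nat.pow_le_pow_right (by norm_num)
                      rw [hL]; exact Nat.div_mul_le_self _ _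
                  _ ≤ b := Nat.pow_log_le_self 2 hbne
              exact_mod_cast this
            exact Real.rpow_le_rpow (by positivity) h2 (by positivity)
          rw [pow_succ]
          have hden : (0:ℝ) < (2:ℝ)^α - 1 := by linarith
          gcongr
          try positivity
      _ = C₂ * 2 ^ N * ((2:ℝ) ^ α / ((2:ℝ) ^ α - 1)) * (b : ℝ) ^ (α / (N:ℝ)) := by
          ring
  -- far part
  have hfar : ∑ j ∈ (Finset.range J).filter (fun j => ¬ (2 ^ (j * N) ≤ b)),
      (∑ y ∈ D.filter (fun y => Nat.log 2 (dd y) = j), (dd y : ℝ) ^ (α - (N:ℝ)))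
      ≤ (1 - q)⁻¹ * (b : ℝ) ^ (α / (N:ℝ)) := by
    calc ∑ j ∈ (Finset.range J).filter (fun j => ¬ (2 ^ (j * N) ≤ b)),
        (∑ y ∈ D.filter (fun y => Nat.log 2 (dd y) = j), (dd y : ℝ) ^ (α - (N:ℝ)))
        ≤ ∑ j ∈ (Finset.range J).filter (fun j => ¬ (2 ^ (j * N) ≤ b)), (b : ℝ) * q ^ j := by
          apply Finset.sum_le_sum
          intro j hj
          simp only [Finset.mem_filter, Finset.mem_range] at hj
          refine (hfiber j (Finset.mem_range.mpr hj.1)).trans ?_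
          exact mul_le_mul_of_nonneg_right (hcard_far j) (by positivity)
      _ = (b:ℝ) * ∑ j ∈ (Finset.range J).filter (fun j => ¬ (2 ^ (j * N) ≤ b)), q ^ j := by
          rw [Finset.mul_sum]
      _ ≤ (b:ℝ) * ∑ j ∈ (Finset.range J).filter (fun j => M ≤ j), q ^ j := by
          apply mul_le_mul_of_nonneg_left ?_ (by positivity)
          apply Finset.sum_le_sum_of_subset_of_nonneg
          · intro j hj
            simp only [Finset.mem_filter, Finset.mem_range, not_le] at hj ⊢
            refine ⟨hj.1, ?_⟩
            have hlog : Nat.log 2 b < j * N := (Nat.log_lt_iff_lt_pow (by norm_num) hbne).mpr hj.2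
            have : Nat.log 2 b / N < j := (Nat.div_lt_iff_lt_mul hNpos).mpr hlog
            omega
          · intro j _ _; positivity
      _ ≤ (b:ℝ) * (q ^ M * (1 - q)⁻¹) := by
          apply mul_le_mul_of_nonneg_left (tail_geom_le hqpos.le hqlt J M) (by positivity)
      _ ≤ (1 - q)⁻¹ * (b : ℝ) ^ (α / (N:ℝ)) := by
          have hq1 : q ^ M ≤ (b:ℝ) ^ ((α - (N:ℝ)) / (N:ℝ)) := by
            have h1 : q ^ M = ((2:ℝ)^((M*N : ℕ):ℝ)) ^ ((α - (N:ℝ)) / (N:ℝ)) := by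
              rw [hqdef, hpow (α - (N:ℝ)) M, ← Real.rpow_mul (by norm_num)]
              congr 1
              push_cast
              field_simp
              try ring
            rw [h1]
            apply Real.rpow_le_rpow_of_nonpos hbR ?_ (by
              apply div_nonpos_of_nonpos_of_nonneg <;> linarith)
            rw [← hnpow (M*N)]
            have : b ≤ (2:ℕ)^(M*N) := by
              have h2 : Nat.log 2 b + 1 ≤ M * N := by
                rw [hM]
                have := Nat.div_add_mod (Nat.log 2 b) N
                have hmod : Nat.log 2 b % N < N := Nat.mod_lt _ hNpos
                nlinarith [Nat.div_mul_le_self (Nat.log 2 b) N]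
              calc b ≤ 2 ^ (Nat.log 2 b + 1) - 1 := by
                    have := Nat.lt_pow_succ_log_self (b := 2) (by norm_num) b
                    omega
                _ ≤ 2 ^ (M*N) := by
                    exact le_trans (Nat.sub_le _ _) (Nat.pow_le_pow_right (by norm_num) h2)
            exact_mod_cast this
          calc (b:ℝ) * (q ^ M * (1 - q)⁻¹)
              ≤ (b:ℝ) * ((b:ℝ) ^ ((α - (N:ℝ)) / (N:ℝ)) * (1 - q)⁻¹) := by
                apply mul_le_mul_of_nonneg_left ?_ (by positivity)
                apply mul_le_mul_of_nonneg_right hq1 (by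
                  apply inv_nonneg.mpr; linarith)
            _ = (1 - q)⁻¹ * (b : ℝ) ^ (α / (N:ℝ)) := by
                have hbb : (b:ℝ) * (b:ℝ) ^ ((α - (N:ℝ)) / (N:ℝ)) = (b:ℝ) ^ (α / (N:ℝ)) := by
                  rw [show (b:ℝ) * (b:ℝ) ^ ((α - (N:ℝ)) / (N:ℝ))
                      = (b:ℝ) ^ ((1:ℝ) + (α - (N:ℝ)) / (N:ℝ)) by
                    rw [Real.rpow_add hbR, Real.rpow_one]]
                  congr 1
                  field_simp
                  ring
                rw [← hbb]
                ring
  calc _ ≤ C₂ * 2 ^ N * ((2:ℝ) ^ α / ((2:ℝ) ^ α - 1)) * (b : ℝ) ^ (α / (N:ℝ))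
        + (1 - q)⁻¹ * (b : ℝ) ^ (α / (N:ℝ)) := add_le_add hnear hfar
    _ = (C₂ * 2 ^ N * ((2:ℝ) ^ α / ((2:ℝ) ^ α - 1)) + (1 - q)⁻¹) * (b : ℝ) ^ (α / (N:ℝ)) := by
        ring

end Kernel
section Master
variable [Group G] [DecidableEq G]

lemma master (S : Finset G) {N : ℕ} (hN : 3 ≤ N) {C₁ C₂ : ℝ} (hC₁ : 0 < C₁) (hC₂ : 0 < C₂)
    (hgrowth : ∀ n : ℕ, 1 ≤ n →
      C₁ * (n : ℝ) ^ N ≤ (Nat.card {x : G // wordDist S 1 x ≤ n} : ℝ) ∧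
      (Nat.card {x : G // wordDist S 1 x ≤ n} : ℝ) ≤ C₂ * (n : ℝ) ^ N)
    (hSsym : ∀ s ∈ S, s⁻¹ ∈ S)
    {α r s : ℝ} (hα : 0 < α) (hαN : α < N) (hr : 1 < r) (hs : 1 < s)
    (hrs : 1 / r + 1 / s + ((N : ℝ) - α) / (N : ℝ) = 2) :
    ∃ Cm : ℝ, 0 < Cm ∧ ∀ F Gf : G → ℝ≥0∞, (∀ x, F x ≠ ⊤) → (∀ y, Gf y ≠ ⊤) →
      (∑' x, F x ^ r ≤ 1) → (∑' y, Gf y ^ s ≤ 1) →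
      ∑' (x : G), ∑' (y : G),
        (if wordDist S x y = 0 then 0 else ((wordDist S x y : ℝ≥0∞) ^ (α - (N : ℝ)))) *
          (F x * Gf y) ≤ ENNReal.ofReal Cm := by
  have hN0 : (0:ℝ) < (N:ℝ) := by positivity
  have hNne : (N:ℝ) ≠ 0 := ne_of_gt hN0
  have hrne : r ≠ 0 := by linarith
  have hsne : s ≠ 0 := by linarith
  have hr0 : (0:ℝ) < r := by linarith
  have hs0 : (0:ℝ) < s := by linarith
  -- arithmetic consequences of the exponent relation
  have hrel : 1 / s = α / (N:ℝ) + 1 - 1 / r := by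
    have h0 : ((N:ℝ) - α) / (N:ℝ) = 1 - α / (N:ℝ) := by field_simp
    rw [h0] at hrs
    linarith
  have hs1 : s * (α / (N:ℝ)) + s - s / r = 1 := by
    have : s * (α / (N:ℝ)) + s - s / r = s * (α / (N:ℝ) + 1 - 1/r) := by ring
    rw [this, ← hrel]
    field_simp
  have hr1 : r * (α / (N:ℝ)) + r - r / s = 1 := by
    have hrel2 : 1 / r = α / (N:ℝ) + 1 - 1 / s := by linarith
    have : r * (α / (N:ℝ)) + r - r / s = r * (α / (N:ℝ) + 1 - 1/s) := by ring
    rw [this, ← hrel2]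
    field_simp
  set c1 : ℝ := 1 - 1/r with hc1def
  set c2 : ℝ := 1 - 1/s with hc2def
  have hc1 : 0 < c1 := by
    have h : 1/r < 1 := (div_lt_one hr0).mpr hr
    rw [hc1def]; linarith
  have hc2 : 0 < c2 := by
    have h : 1/s < 1 := (div_lt_one hs0).mpr hs
    rw [hc2def]; linarith
  -- exponent identities
  have hrr : r * (1/r) = 1 := by field_simp
  have hss : s * (1/s) = 1 := by field_simp
  have hexp1 : ∀ mm nn : ℝ, mm + nn = mm*r + nn*s*(α/(N:ℝ)) + (nn*s - mm*r)*c1 := by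
    intro mm nn
    rw [hc1def]
    linear_combination (-nn) * hs1 + (-mm) * hrr
  have hexp2 : ∀ mm nn : ℝ, mm + nn = nn*s + mm*r*(α/(N:ℝ)) + (mm*r - nn*s)*c2 := by
    intro mm nn
    rw [hc2def]
    linear_combination (-mm) * hr1 + (-nn) * hss
  -- ENNReal power helpers
  have h2ne0 : (2:ℝ≥0∞) ≠ 0 := by norm_num
  have h2net : (2:ℝ≥0∞) ≠ ⊤ := by norm_num
  have h2e : ∀ z : ℝ, (2:ℝ≥0∞) ^ z = ENNReal.ofReal ((2:ℝ) ^ z) := by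
    intro z
    rw [← ENNReal.ofReal_rpow_of_pos (by norm_num : (0:ℝ) < 2)]
    norm_num
  have h2lt1 : ∀ z : ℝ, z < 0 → (2:ℝ≥0∞) ^ z < 1 := by
    intro z hz
    rw [h2e]
    exact ENNReal.ofReal_lt_one.mpr (Real.rpow_lt_one_of_one_lt_of_neg (by norm_num) hz)
  -- constants
  set C₃ : ℝ := C₂ * 2 ^ N * ((2:ℝ) ^ α / ((2:ℝ) ^ α - 1)) + (1 - (2:ℝ) ^ (α - (N:ℝ)))⁻¹
    with hC₃def
  have h2α : (1:ℝ) < (2:ℝ) ^ α :=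
    Real.one_lt_rpow_iff_of_pos (by norm_num) |>.mpr (Or.inl ⟨by norm_num, hα⟩)
  have hqlt : (2:ℝ) ^ (α - (N:ℝ)) < 1 :=
    Real.rpow_lt_one_of_one_lt_of_neg (by norm_num) (by linarith)
  have hC₃ : 0 < C₃ := by
    rw [hC₃def]
    have h1 : (0:ℝ) < (2:ℝ)^α / ((2:ℝ)^α - 1) := div_pos (by positivity) (by linarith)
    have h2 : (0:ℝ) < (1 - (2:ℝ) ^ (α - (N:ℝ)))⁻¹ := inv_pos.mpr (by linarith)
    positivity
  set K₁ : ℝ≥0∞ := (1 - (2:ℝ≥0∞) ^ (-(s * c1)))⁻¹ with hK₁def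
  set K₂ : ℝ≥0∞ := (1 - (2:ℝ≥0∞) ^ (-(r * c2)))⁻¹ with hK₂def
  have hK₁top : K₁ ≠ ⊤ := by
    rw [hK₁def]
    apply ENNReal.inv_ne_top.mpr
    rw [ne_eq, tsub_eq_zero_iff_le, not_le]
    exact h2lt1 _ (by nlinarith)
  have hK₂top : K₂ ≠ ⊤ := by
    rw [hK₂def]
    apply ENNReal.inv_ne_top.mpr
    rw [ne_eq, tsub_eq_zero_iff_le, not_le]
    exact h2lt1 _ (by nlinarith)
  set B : ℝ≥0∞ := 4 * ENNReal.ofReal C₃ * (K₁ + K₂) with hBdef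
  have hBtop : B ≠ ⊤ := by
    rw [hBdef]
    exact ENNReal.mul_ne_top (ENNReal.mul_ne_top (by norm_num) ENNReal.ofReal_ne_top)
      (ENNReal.add_ne_top.mpr ⟨hK₁top, hK₂top⟩)

  -- ENNReal kernel
  set κ : G → G → ℝ≥0∞ := fun x y =>
    if wordDist S x y = 0 then 0 else ((wordDist S x y : ℝ≥0∞) ^ (α - (N : ℝ))) with hκdef
  have hmul2 : ∀ u v : ℝ, (2:ℝ≥0∞)^u * (2:ℝ≥0∞)^v = (2:ℝ≥0∞)^(u+v) :=
    fun u v => (ENNReal.rpow_add _ _ h2ne0 h2net).symm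
  have hker : ∀ (x : G) (T : Finset G),
      ∑ y ∈ T, κ x y ≤ ENNReal.ofReal C₃ * ((T.card : ℝ≥0∞)) ^ (α / (N:ℝ)) := by
    intro x T
    have hreal := kernel_sum_le S hN hC₁ hC₂ hgrowth hα hαN x T
    have heq : ∑ y ∈ T, κ x y = ENNReal.ofReal
        (∑ y ∈ T, if wordDist S x y = 0 then (0:ℝ) else (wordDist S x y : ℝ) ^ (α - (N:ℝ))) := by
      rw [ENNReal.ofReal_sum_of_nonneg]
      · apply Finset.sum_congr rfl
        intro y _
        simp only [hκdef]
        by_cases hd : wordDist S x y = 0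
        · simp [hd]
        · rw [if_neg hd, if_neg hd]
          have hdpos : (0:ℝ) < (wordDist S x y : ℝ) := by
            exact_mod_cast Nat.pos_of_ne_zero hd
          rw [← ENNReal.ofReal_rpow_of_pos hdpos, ENNReal.ofReal_natCast]
      · intro y _
        by_cases hd : wordDist S x y = 0
        · simp [hd]
        · rw [if_neg hd]
          exact Real.rpow_nonneg (by positivity) _
    rw [heq]
    refine le_trans (ENNReal.ofReal_le_ofReal hreal) (le_of_eq ?_)
    rw [← hC₃def, ENNReal.ofReal_mul hC₃.le,
      ← ENNReal.ofReal_rpow_of_nonneg (Nat.cast_nonneg _ : (0:ℝ) ≤ (T.card:ℝ)) (div_nonneg hα.le hN0.le),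
      ENNReal.ofReal_natCast]
  have hκsymm : ∀ x y, κ x y = κ y x := by
    intro x y
    simp only [hκdef]
    rw [wordDist_symm S hSsym x y]
  have hkerT : ∀ (y : G) (T : Finset G),
      ∑ x ∈ T, κ x y ≤ ENNReal.ofReal C₃ * ((T.card : ℝ≥0∞)) ^ (α / (N:ℝ)) := by
    intro y T
    calc ∑ x ∈ T, κ x y = ∑ x ∈ T, κ y x :=
          Finset.sum_congr rfl (fun x _ => hκsymm x y)
      _ ≤ _ := hker y T
  refine ⟨B.toReal + 1, by positivity, ?_⟩
  intro F Gf hFt hGt hF1 hG1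
  -- level-set decomposition machinery
  have hlev : ∀ (H : G → ℝ≥0∞) (p : ℝ), 0 < p → (∀ x, H x ≠ ⊤) → (∑' x, H x ^ p ≤ 1) →
      ∃ AH : ℤ → Finset G,
        (∀ m x, x ∈ AH m → (2:ℝ≥0∞)^((m:ℝ)) ≤ H x ∧ H x ≤ (2:ℝ≥0∞)^((m:ℝ)+1)) ∧
        (∀ x, ∑' m : ℤ, (if x ∈ AH m then H x else 0) = H x) ∧
        (∀ m : ℤ, (2:ℝ≥0∞)^((m:ℝ)*p) * (((AH m).card : ℕ) : ℝ≥0∞) ≤ 1) ∧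
        (∑' m : ℤ, (2:ℝ≥0∞)^((m:ℝ)*p) * (((AH m).card : ℕ) : ℝ≥0∞) ≤ 1) := by
    intro H p hp hHt hH1
    have hHne : ∑' x, H x ^ p ≠ ⊤ := (hH1.trans_lt ENNReal.one_lt_top).ne
    set lev : ℤ → Set G := fun m => {x | H x ≠ 0 ∧ ⌊Real.logb 2 (H x).toReal⌋ = m} with hlevdef
    have hbound : ∀ m x, x ∈ lev m →
        (2:ℝ≥0∞)^((m:ℝ)) ≤ H x ∧ H x ≤ (2:ℝ≥0∞)^((m:ℝ)+1) := by
      intro m x hx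
      obtain ⟨hx0, hxm⟩ := hx
      have hvpos : 0 < (H x).toReal := ENNReal.toReal_pos hx0 (hHt x)
      have hxe : H x = ENNReal.ofReal (H x).toReal := (ENNReal.ofReal_toReal (hHt x)).symm
      constructor
      · rw [hxe, h2e]
        apply ENNReal.ofReal_le_ofReal
        calc (2:ℝ)^((m:ℝ)) ≤ (2:ℝ)^(Real.logb 2 (H x).toReal) := by
              apply Real.rpow_le_rpow_of_exponent_le (by norm_num)
              rw [← hxm]; exact Int.floor_le _
          _ = (H x).toReal := Real.rpow_logb (by norm_num) (by norm_num) hvpos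
      · rw [hxe, h2e]
        apply ENNReal.ofReal_le_ofReal
        calc (H x).toReal = (2:ℝ)^(Real.logb 2 (H x).toReal) :=
              (Real.rpow_logb (by norm_num) (by norm_num) hvpos).symm
          _ ≤ (2:ℝ)^((m:ℝ)+1) := by
              apply Real.rpow_le_rpow_of_exponent_le (by norm_num)
              rw [← hxm]
              exact le_of_lt (Int.lt_floor_add_one _)
    have hfin : ∀ m, (lev m).Finite := by
      intro m
      apply Set.Finite.subset (ENNReal.finite_const_le_of_tsum_ne_top hHne
        (ε := (2:ℝ≥0∞)^((m:ℝ)*p)) (ENNReal.rpow_pos (by norm_num) (by norm_num)).ne')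
      intro x hx
      show (2:ℝ≥0∞)^((m:ℝ)*p) ≤ H x ^ p
      rw [ENNReal.rpow_mul]
      exact ENNReal.rpow_le_rpow (hbound m x hx).1 hp.le
    have hmem : ∀ m x, x ∈ (hfin m).toFinset ↔ x ∈ lev m :=
      fun m x => Set.Finite.mem_toFinset _
    have hone : ∀ m : ℤ, (2:ℝ≥0∞)^((m:ℝ)*p) * ((((hfin m).toFinset).card : ℕ) : ℝ≥0∞)
        ≤ ∑ x ∈ (hfin m).toFinset, H x ^ p := by
      intro m
      calc (2:ℝ≥0∞)^((m:ℝ)*p) * ((((hfin m).toFinset).card : ℕ) : ℝ≥0∞)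
          = ∑ _x ∈ (hfin m).toFinset, (2:ℝ≥0∞)^((m:ℝ)*p) := by
            rw [Finset.sum_const, nsmul_eq_mul, mul_comm]
        _ ≤ ∑ x ∈ (hfin m).toFinset, H x ^ p := by
            apply Finset.sum_le_sum
            intro x hx
            rw [ENNReal.rpow_mul]
            exact ENNReal.rpow_le_rpow (hbound m x ((hmem m x).mp hx)).1 hp.le
    refine ⟨fun m => (hfin m).toFinset, ?_, ?_, ?_, ?_⟩
    · intro m x hx
      exact hbound m x ((hmem m x).mp hx)
    · intro x
      by_cases hx0 : H x = 0
      · have hz : ∀ m : ℤ, (if x ∈ (hfin m).toFinset then H x else 0) = 0 := by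
          intro m; split <;> simp [hx0]
        calc ∑' m : ℤ, (if x ∈ (hfin m).toFinset then H x else 0)
            = ∑' _m : ℤ, (0:ℝ≥0∞) := tsum_congr hz
          _ = 0 := tsum_zero
          _ = H x := hx0.symm
      · have hx0' : x ∈ (hfin ⌊Real.logb 2 (H x).toReal⌋).toFinset := by
          rw [hmem]
          exact ⟨hx0, rfl⟩
        rw [tsum_eq_single ⌊Real.logb 2 (H x).toReal⌋ ?_]
        · rw [if_pos hx0']
        · intro m' hm'
          rw [if_neg]
          intro hmem'
          rw [hmem] at hmem'
          exact hm' (hmem'.2.symm ▸ rfl)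
    · intro m
      exact (hone m).trans ((ENNReal.sum_le_tsum _).trans hH1)
    · apply ennreal_tsum_le_of_sum_le
      intro Ms
      have hdisj : (↑Ms : Set ℤ).PairwiseDisjoint (fun m => (hfin m).toFinset) := by
        intro m _ n _ hmn
        apply Finset.disjoint_left.mpr
        intro x hxm hxn
        rw [hmem] at hxm hxn
        exact hmn (hxm.2.symm.trans hxn.2)
      calc ∑ m ∈ Ms, (2:ℝ≥0∞)^((m:ℝ)*p) * ((((hfin m).toFinset).card : ℕ) : ℝ≥0∞)
          ≤ ∑ m ∈ Ms, ∑ x ∈ (hfin m).toFinset, H x ^ p := Finset.sum_le_sum (fun m _ => hone m)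
        _ = ∑ x ∈ Ms.biUnion (fun m => (hfin m).toFinset), H x ^ p :=
            (Finset.sum_biUnion hdisj).symm
        _ ≤ ∑' x, H x ^ p := ENNReal.sum_le_tsum _
        _ ≤ 1 := hH1
  obtain ⟨AF, hAFb, hAFcov, hAFcheb, hAFtot⟩ := hlev F r hr0 hFt hF1
  obtain ⟨AG, hAGb, hAGcov, hAGcheb, hAGtot⟩ := hlev Gf s hs0 hGt hG1
  set Aa : ℤ → ℝ≥0∞ := fun m => (2:ℝ≥0∞)^((m:ℝ)*r) * (((AF m).card : ℕ) : ℝ≥0∞) with hAadef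
  set Bb : ℤ → ℝ≥0∞ := fun n => (2:ℝ≥0∞)^((n:ℝ)*s) * (((AG n).card : ℕ) : ℝ≥0∞) with hBbdef
  -- pointwise decomposition
  have hptF : ∀ x y, κ x y * (F x * Gf y)
      = ∑' (m : ℤ), ∑' (n : ℤ), κ x y *
          ((if x ∈ AF m then F x else 0) * (if y ∈ AG n then Gf y else 0)) := by
    intro x y
    symm
    calc ∑' (m : ℤ), ∑' (n : ℤ), κ x y *
          ((if x ∈ AF m then F x else 0) * (if y ∈ AG n then Gf y else 0))
        = ∑' (m : ℤ), (κ x y * (if x ∈ AF m then F x else 0)) * Gf y := by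
          apply tsum_congr; intro m
          calc ∑' (n : ℤ), κ x y *
                ((if x ∈ AF m then F x else 0) * (if y ∈ AG n then Gf y else 0))
              = ∑' (n : ℤ), (κ x y * (if x ∈ AF m then F x else 0)) *
                  (if y ∈ AG n then Gf y else 0) := by
                apply tsum_congr; intro n; ring
            _ = (κ x y * (if x ∈ AF m then F x else 0)) *
                  ∑' (n : ℤ), (if y ∈ AG n then Gf y else 0) := ENNReal.tsum_mul_left
            _ = (κ x y * (if x ∈ AF m then F x else 0)) * Gf y := by rw [hAGcov]
      _ = ∑' (m : ℤ), (κ x y * Gf y) * (if x ∈ AF m then F x else 0) := by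
          apply tsum_congr; intro m; ring
      _ = (κ x y * Gf y) * ∑' (m : ℤ), (if x ∈ AF m then F x else 0) := ENNReal.tsum_mul_left
      _ = κ x y * (F x * Gf y) := by rw [hAFcov]; ring
  -- swap the sums
  have hswap : ∑' (x : G), ∑' (y : G), κ x y * (F x * Gf y)
      = ∑' (m : ℤ), ∑' (n : ℤ), ∑' (x : G), ∑' (y : G),
          κ x y * ((if x ∈ AF m then F x else 0) * (if y ∈ AG n then Gf y else 0)) := by
    calc ∑' (x : G), ∑' (y : G), κ x y * (F x * Gf y)
        = ∑' (x : G), ∑' (y : G), ∑' (m : ℤ), ∑' (n : ℤ),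
            κ x y * ((if x ∈ AF m then F x else 0) * (if y ∈ AG n then Gf y else 0)) := by
          apply tsum_congr; intro x; apply tsum_congr; intro y; exact hptF x y
      _ = ∑' (x : G), ∑' (m : ℤ), ∑' (y : G), ∑' (n : ℤ),
            κ x y * ((if x ∈ AF m then F x else 0) * (if y ∈ AG n then Gf y else 0)) := by
          apply tsum_congr; intro x; exact ENNReal.tsum_comm
      _ = ∑' (m : ℤ), ∑' (x : G), ∑' (y : G), ∑' (n : ℤ),
            κ x y * ((if x ∈ AF m then F x else 0) * (if y ∈ AG n then Gf y else 0)) :=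
          ENNReal.tsum_comm
      _ = ∑' (m : ℤ), ∑' (x : G), ∑' (n : ℤ), ∑' (y : G),
            κ x y * ((if x ∈ AF m then F x else 0) * (if y ∈ AG n then Gf y else 0)) := by
          apply tsum_congr; intro m; apply tsum_congr; intro x; exact ENNReal.tsum_comm
      _ = ∑' (m : ℤ), ∑' (n : ℤ), ∑' (x : G), ∑' (y : G),
            κ x y * ((if x ∈ AF m then F x else 0) * (if y ∈ AG n then Gf y else 0)) := by
          apply tsum_congr; intro m; exact ENNReal.tsum_comm
  -- reduce each (m,n) block to a finite double sum
  have hQ : ∀ (m n : ℤ), ∑' (x : G), ∑' (y : G),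
      κ x y * ((if x ∈ AF m then F x else 0) * (if y ∈ AG n then Gf y else 0))
      ≤ (2:ℝ≥0∞)^((m:ℝ)+1) * (2:ℝ≥0∞)^((n:ℝ)+1) * ∑ x ∈ AF m, ∑ y ∈ AG n, κ x y := by
    intro m n
    have hx0 : ∀ x ∉ AF m, ∑' (y : G),
        κ x y * ((if x ∈ AF m then F x else 0) * (if y ∈ AG n then Gf y else 0)) = 0 := by
      intro x hx
      simp [hx]
    rw [tsum_eq_sum hx0]
    have hxy : ∀ x ∈ AF m, ∑' (y : G),
        κ x y * ((if x ∈ AF m then F x else 0) * (if y ∈ AG n then Gf y else 0))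
        = ∑ y ∈ AG n, κ x y * ((if x ∈ AF m then F x else 0) * (if y ∈ AG n then Gf y else 0)) := by
      intro x _
      apply tsum_eq_sum
      intro y hy
      simp [hy]
    calc ∑ x ∈ AF m, ∑' (y : G),
          κ x y * ((if x ∈ AF m then F x else 0) * (if y ∈ AG n then Gf y else 0))
        = ∑ x ∈ AF m, ∑ y ∈ AG n,
            κ x y * ((if x ∈ AF m then F x else 0) * (if y ∈ AG n then Gf y else 0)) :=
          Finset.sum_congr rfl hxy
      _ ≤ ∑ x ∈ AF m, ∑ y ∈ AG n,
            (2:ℝ≥0∞)^((m:ℝ)+1) * (2:ℝ≥0∞)^((n:ℝ)+1) * κ x y := by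
          apply Finset.sum_le_sum; intro x hx
          apply Finset.sum_le_sum; intro y hy
          rw [if_pos hx, if_pos hy]
          calc κ x y * (F x * Gf y)
              ≤ κ x y * ((2:ℝ≥0∞)^((m:ℝ)+1) * (2:ℝ≥0∞)^((n:ℝ)+1)) :=
                mul_le_mul_right (mul_le_mul' (hAFb m x hx).2 (hAGb n y hy).2) _
            _ = (2:ℝ≥0∞)^((m:ℝ)+1) * (2:ℝ≥0∞)^((n:ℝ)+1) * κ x y := by ring
      _ = (2:ℝ≥0∞)^((m:ℝ)+1) * (2:ℝ≥0∞)^((n:ℝ)+1) * ∑ x ∈ AF m, ∑ y ∈ AG n, κ x y := by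
          simp_rw [← Finset.mul_sum]
  -- the decisive per-block estimate
  set bnd : ℤ → ℤ → ℝ≥0∞ := fun m n =>
    if (n:ℝ)*s ≤ (m:ℝ)*r then Aa m * (2:ℝ≥0∞)^(((n:ℝ)*s - (m:ℝ)*r)*c1)
    else Bb n * (2:ℝ≥0∞)^(((m:ℝ)*r - (n:ℝ)*s)*c2) with hbnddef
  have hMN : ∀ (m n : ℤ),
      (2:ℝ≥0∞)^((m:ℝ)+1) * (2:ℝ≥0∞)^((n:ℝ)+1) * (∑ x ∈ AF m, ∑ y ∈ AG n, κ x y)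
      ≤ 4 * ENNReal.ofReal C₃ * bnd m n := by
    intro m n
    have h4 : (2:ℝ≥0∞)^((m:ℝ)+1) * (2:ℝ≥0∞)^((n:ℝ)+1)
        = 4 * ((2:ℝ≥0∞)^((m:ℝ)) * (2:ℝ≥0∞)^((n:ℝ))) := by
      rw [ENNReal.rpow_add _ _ h2ne0 h2net, ENNReal.rpow_add _ _ h2ne0 h2net, ENNReal.rpow_one]
      ring
    by_cases hc : (n:ℝ)*s ≤ (m:ℝ)*r
    · have hP : ∑ x ∈ AF m, ∑ y ∈ AG n, κ x y
          ≤ (((AF m).card : ℕ) : ℝ≥0∞) *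
            (ENNReal.ofReal C₃ * ((((AG n).card : ℕ) : ℝ≥0∞)) ^ (α/(N:ℝ))) := by
        calc ∑ x ∈ AF m, ∑ y ∈ AG n, κ x y
            ≤ ∑ _x ∈ AF m, ENNReal.ofReal C₃ * ((((AG n).card : ℕ) : ℝ≥0∞)) ^ (α/(N:ℝ)) :=
              Finset.sum_le_sum (fun x _ => hker x (AG n))
          _ = _ := by rw [Finset.sum_const, nsmul_eq_mul]
      have hid : (2:ℝ≥0∞)^((m:ℝ)) * (2:ℝ≥0∞)^((n:ℝ)) *
            ((((AF m).card : ℕ) : ℝ≥0∞) * ((((AG n).card : ℕ) : ℝ≥0∞)) ^ (α/(N:ℝ)))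
          = Aa m * (Bb n) ^ (α/(N:ℝ)) * (2:ℝ≥0∞)^(((n:ℝ)*s - (m:ℝ)*r)*c1) := by
        rw [hAadef, hBbdef]
        simp only
        rw [ENNReal.mul_rpow_of_nonneg _ _ (by positivity : (0:ℝ) ≤ α/(N:ℝ)),
          ← ENNReal.rpow_mul]
        rw [show ((2:ℝ≥0∞)^((m:ℝ)*r) * (((AF m).card : ℕ) : ℝ≥0∞)) *
              ((2:ℝ≥0∞)^((n:ℝ)*s*(α/(N:ℝ))) * ((((AG n).card : ℕ) : ℝ≥0∞)) ^ (α/(N:ℝ))) *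
              (2:ℝ≥0∞)^(((n:ℝ)*s - (m:ℝ)*r)*c1)
            = ((2:ℝ≥0∞)^((m:ℝ)*r) * ((2:ℝ≥0∞)^((n:ℝ)*s*(α/(N:ℝ))) *
                (2:ℝ≥0∞)^(((n:ℝ)*s - (m:ℝ)*r)*c1))) *
              ((((AF m).card : ℕ) : ℝ≥0∞) * ((((AG n).card : ℕ) : ℝ≥0∞)) ^ (α/(N:ℝ)))
            from by ring]
        rw [hmul2, hmul2, hmul2]
        congr 2
        linarith [hexp1 ((m:ℝ)) ((n:ℝ))]
      calc (2:ℝ≥0∞)^((m:ℝ)+1) * (2:ℝ≥0∞)^((n:ℝ)+1) * (∑ x ∈ AF m, ∑ y ∈ AG n, κ x y)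
          ≤ (2:ℝ≥0∞)^((m:ℝ)+1) * (2:ℝ≥0∞)^((n:ℝ)+1) *
              ((((AF m).card : ℕ) : ℝ≥0∞) *
                (ENNReal.ofReal C₃ * ((((AG n).card : ℕ) : ℝ≥0∞)) ^ (α/(N:ℝ)))) :=
            mul_le_mul_right hP _
        _ = 4 * ENNReal.ofReal C₃ * ((2:ℝ≥0∞)^((m:ℝ)) * (2:ℝ≥0∞)^((n:ℝ)) *
              ((((AF m).card : ℕ) : ℝ≥0∞) * ((((AG n).card : ℕ) : ℝ≥0∞)) ^ (α/(N:ℝ)))) := by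
            rw [h4]; ring
        _ = 4 * ENNReal.ofReal C₃ *
              (Aa m * (Bb n) ^ (α/(N:ℝ)) * (2:ℝ≥0∞)^(((n:ℝ)*s - (m:ℝ)*r)*c1)) := by
            rw [hid]
        _ ≤ 4 * ENNReal.ofReal C₃ * (Aa m * 1 * (2:ℝ≥0∞)^(((n:ℝ)*s - (m:ℝ)*r)*c1)) := by
            apply mul_le_mul_right
            apply mul_le_mul_left
            apply mul_le_mul_right
            exact ENNReal.rpow_le_one (hAGcheb n) (by positivity)
        _ = 4 * ENNReal.ofReal C₃ * bnd m n := by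
            rw [hbnddef]; simp only; rw [if_pos hc]; ring
    · have hP : ∑ x ∈ AF m, ∑ y ∈ AG n, κ x y
          ≤ (((AG n).card : ℕ) : ℝ≥0∞) *
            (ENNReal.ofReal C₃ * ((((AF m).card : ℕ) : ℝ≥0∞)) ^ (α/(N:ℝ))) := by
        rw [Finset.sum_comm]
        calc ∑ y ∈ AG n, ∑ x ∈ AF m, κ x y
            ≤ ∑ _y ∈ AG n, ENNReal.ofReal C₃ * ((((AF m).card : ℕ) : ℝ≥0∞)) ^ (α/(N:ℝ)) :=
              Finset.sum_le_sum (fun y _ => hkerT y (AF m))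
          _ = _ := by rw [Finset.sum_const, nsmul_eq_mul]
      have hid : (2:ℝ≥0∞)^((m:ℝ)) * (2:ℝ≥0∞)^((n:ℝ)) *
            ((((AG n).card : ℕ) : ℝ≥0∞) * ((((AF m).card : ℕ) : ℝ≥0∞)) ^ (α/(N:ℝ)))
          = Bb n * (Aa m) ^ (α/(N:ℝ)) * (2:ℝ≥0∞)^(((m:ℝ)*r - (n:ℝ)*s)*c2) := by
        rw [hAadef, hBbdef]
        simp only
        rw [ENNReal.mul_rpow_of_nonneg _ _ (by positivity : (0:ℝ) ≤ α/(N:ℝ)),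
          ← ENNReal.rpow_mul]
        rw [show ((2:ℝ≥0∞)^((n:ℝ)*s) * (((AG n).card : ℕ) : ℝ≥0∞)) *
              ((2:ℝ≥0∞)^((m:ℝ)*r*(α/(N:ℝ))) * ((((AF m).card : ℕ) : ℝ≥0∞)) ^ (α/(N:ℝ))) *
              (2:ℝ≥0∞)^(((m:ℝ)*r - (n:ℝ)*s)*c2)
            = ((2:ℝ≥0∞)^((n:ℝ)*s) * ((2:ℝ≥0∞)^((m:ℝ)*r*(α/(N:ℝ))) *
                (2:ℝ≥0∞)^(((m:ℝ)*r - (n:ℝ)*s)*c2))) *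
              ((((AG n).card : ℕ) : ℝ≥0∞) * ((((AF m).card : ℕ) : ℝ≥0∞)) ^ (α/(N:ℝ)))
            from by ring]
        rw [hmul2, hmul2, hmul2]
        congr 2
        linarith [hexp2 ((m:ℝ)) ((n:ℝ))]
      calc (2:ℝ≥0∞)^((m:ℝ)+1) * (2:ℝ≥0∞)^((n:ℝ)+1) * (∑ x ∈ AF m, ∑ y ∈ AG n, κ x y)
          ≤ (2:ℝ≥0∞)^((m:ℝ)+1) * (2:ℝ≥0∞)^((n:ℝ)+1) *
              ((((AG n).card : ℕ) : ℝ≥0∞) *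
                (ENNReal.ofReal C₃ * ((((AF m).card : ℕ) : ℝ≥0∞)) ^ (α/(N:ℝ)))) :=
            mul_le_mul_right hP _
        _ = 4 * ENNReal.ofReal C₃ * ((2:ℝ≥0∞)^((m:ℝ)) * (2:ℝ≥0∞)^((n:ℝ)) *
              ((((AG n).card : ℕ) : ℝ≥0∞) * ((((AF m).card : ℕ) : ℝ≥0∞)) ^ (α/(N:ℝ)))) := by
            rw [h4]; ring
        _ = 4 * ENNReal.ofReal C₃ *
              (Bb n * (Aa m) ^ (α/(N:ℝ)) * (2:ℝ≥0∞)^(((m:ℝ)*r - (n:ℝ)*s)*c2)) := by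
            rw [hid]
        _ ≤ 4 * ENNReal.ofReal C₃ * (Bb n * 1 * (2:ℝ≥0∞)^(((m:ℝ)*r - (n:ℝ)*s)*c2)) := by
            apply mul_le_mul_right
            apply mul_le_mul_left
            apply mul_le_mul_right
            exact ENNReal.rpow_le_one (hAFcheb m) (by positivity)
        _ = 4 * ENNReal.ofReal C₃ * bnd m n := by
            rw [hbnddef]; simp only; rw [if_neg hc]; ring
  -- sum the bound
  have hbndsum : ∑' (m : ℤ), ∑' (n : ℤ), bnd m n ≤ K₁ + K₂ := by
    have hsplit : ∀ m n : ℤ, bnd m n =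
        (if (n:ℝ)*s ≤ (m:ℝ)*r then Aa m * (2:ℝ≥0∞)^(((n:ℝ)*s - (m:ℝ)*r)*c1) else 0)
      + (if (n:ℝ)*s ≤ (m:ℝ)*r then 0 else Bb n * (2:ℝ≥0∞)^(((m:ℝ)*r - (n:ℝ)*s)*c2)) := by
      intro m n
      rw [hbnddef]
      by_cases hc : (n:ℝ)*s ≤ (m:ℝ)*r <;> simp [hc]
    have hg1 : ∑' (m : ℤ), ∑' (n : ℤ),
        (if (n:ℝ)*s ≤ (m:ℝ)*r then Aa m * (2:ℝ≥0∞)^(((n:ℝ)*s - (m:ℝ)*r)*c1) else 0) ≤ K₁ := by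
      calc ∑' (m : ℤ), ∑' (n : ℤ),
          (if (n:ℝ)*s ≤ (m:ℝ)*r then Aa m * (2:ℝ≥0∞)^(((n:ℝ)*s - (m:ℝ)*r)*c1) else 0)
          = ∑' (m : ℤ), Aa m * ∑' (n : ℤ),
              (if (n:ℝ)*s ≤ (m:ℝ)*r then (2:ℝ≥0∞)^(((n:ℝ)*s - (m:ℝ)*r)*c1) else 0) := by
            apply tsum_congr; intro m
            rw [← ENNReal.tsum_mul_left]
            apply tsum_congr; intro n
            by_cases hc : (n:ℝ)*s ≤ (m:ℝ)*r <;> simp [hc]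
        _ ≤ ∑' (m : ℤ), Aa m * K₁ := by
            apply ENNReal.tsum_le_tsum; intro m
            apply mul_le_mul_right
            rw [hK₁def]
            exact geomZ hs0 hc1 ((m:ℝ)*r)
        _ = (∑' (m : ℤ), Aa m) * K₁ := ENNReal.tsum_mul_right
        _ ≤ 1 * K₁ := mul_le_mul_left hAFtot _
        _ = K₁ := one_mul _
    have hg2 : ∑' (m : ℤ), ∑' (n : ℤ),
        (if (n:ℝ)*s ≤ (m:ℝ)*r then 0 else Bb n * (2:ℝ≥0∞)^(((m:ℝ)*r - (n:ℝ)*s)*c2)) ≤ K₂ := by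
      calc ∑' (m : ℤ), ∑' (n : ℤ),
          (if (n:ℝ)*s ≤ (m:ℝ)*r then 0 else Bb n * (2:ℝ≥0∞)^(((m:ℝ)*r - (n:ℝ)*s)*c2))
          = ∑' (n : ℤ), ∑' (m : ℤ),
              (if (n:ℝ)*s ≤ (m:ℝ)*r then 0 else Bb n * (2:ℝ≥0∞)^(((m:ℝ)*r - (n:ℝ)*s)*c2)) :=
            ENNReal.tsum_comm
        _ ≤ ∑' (n : ℤ), Bb n * ∑' (m : ℤ),
              (if (m:ℝ)*r ≤ (n:ℝ)*s then (2:ℝ≥0∞)^(((m:ℝ)*r - (n:ℝ)*s)*c2) else 0) := by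
            apply ENNReal.tsum_le_tsum; intro n
            rw [← ENNReal.tsum_mul_left]
            apply ENNReal.tsum_le_tsum; intro m
            by_cases hc : (n:ℝ)*s ≤ (m:ℝ)*r
            · simp [hc]
            · have hc' : (m:ℝ)*r ≤ (n:ℝ)*s := le_of_lt (lt_of_not_ge hc)
              rw [if_neg hc, if_pos hc']
        _ ≤ ∑' (n : ℤ), Bb n * K₂ := by
            apply ENNReal.tsum_le_tsum; intro n
            apply mul_le_mul_right
            rw [hK₂def]
            exact geomZ hr0 hc2 ((n:ℝ)*s)
        _ = (∑' (n : ℤ), Bb n) * K₂ := ENNReal.tsum_mul_right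
        _ ≤ 1 * K₂ := mul_le_mul_left hAGtot _
        _ = K₂ := one_mul _
    calc ∑' (m : ℤ), ∑' (n : ℤ), bnd m n
        = ∑' (m : ℤ), (∑' (n : ℤ),
            (if (n:ℝ)*s ≤ (m:ℝ)*r then Aa m * (2:ℝ≥0∞)^(((n:ℝ)*s - (m:ℝ)*r)*c1) else 0)
          + ∑' (n : ℤ),
            (if (n:ℝ)*s ≤ (m:ℝ)*r then 0 else Bb n * (2:ℝ≥0∞)^(((m:ℝ)*r - (n:ℝ)*s)*c2))) := by
          apply tsum_congr; intro m
          rw [← ENNReal.tsum_add]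
          apply tsum_congr; intro n
          exact hsplit m n
      _ = ∑' (m : ℤ), ∑' (n : ℤ),
            (if (n:ℝ)*s ≤ (m:ℝ)*r then Aa m * (2:ℝ≥0∞)^(((n:ℝ)*s - (m:ℝ)*r)*c1) else 0)
          + ∑' (m : ℤ), ∑' (n : ℤ),
            (if (n:ℝ)*s ≤ (m:ℝ)*r then 0 else Bb n * (2:ℝ≥0∞)^(((m:ℝ)*r - (n:ℝ)*s)*c2)) :=
          ENNReal.tsum_add
      _ ≤ K₁ + K₂ := add_le_add hg1 hg2
  -- conclude
  have hmain : ∑' (x : G), ∑' (y : G), κ x y * (F x * Gf y) ≤ B := by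
    calc ∑' (x : G), ∑' (y : G), κ x y * (F x * Gf y)
        = ∑' (m : ℤ), ∑' (n : ℤ), ∑' (x : G), ∑' (y : G),
            κ x y * ((if x ∈ AF m then F x else 0) * (if y ∈ AG n then Gf y else 0)) := hswap
      _ ≤ ∑' (m : ℤ), ∑' (n : ℤ), 4 * ENNReal.ofReal C₃ * bnd m n := by
          apply ENNReal.tsum_le_tsum; intro m
          apply ENNReal.tsum_le_tsum; intro n
          exact (hQ m n).trans (hMN m n)
      _ = 4 * ENNReal.ofReal C₃ * ∑' (m : ℤ), ∑' (n : ℤ), bnd m n := by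
          calc ∑' (m : ℤ), ∑' (n : ℤ), 4 * ENNReal.ofReal C₃ * bnd m n
              = ∑' (m : ℤ), 4 * ENNReal.ofReal C₃ * ∑' (n : ℤ), bnd m n :=
                tsum_congr (fun m => ENNReal.tsum_mul_left)
            _ = 4 * ENNReal.ofReal C₃ * ∑' (m : ℤ), ∑' (n : ℤ), bnd m n := ENNReal.tsum_mul_left
      _ ≤ 4 * ENNReal.ofReal C₃ * (K₁ + K₂) := mul_le_mul_right hbndsum _
      _ = B := hBdef.symm
  refine hmain.trans ?_
  conv_lhs => rw [← ENNReal.ofReal_toReal hBtop]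
  exact ENNReal.ofReal_le_ofReal (by linarith)

end Master

end AuxHLS

theorem discrete_HLS_inequality
    [Group G] [Countable G] [DecidableEq G]
    (S : Finset G) (hS_gen : Subgroup.closure (S : Set G) = ⊤)
    (hS_sym : ∀ s ∈ S, s⁻¹ ∈ S) (hS_e : (1 : G) ∉ S)
    (N : ℕ) (hN : 3 ≤ N)
    (C₁ C₂ : ℝ) (hC₁ : 0 < C₁) (hC₂ : 0 < C₂)
    (hgrowth : ∀ n : ℕ, 1 ≤ n →
      C₁ * (n : ℝ) ^ N ≤ (Nat.card {x : G // wordDist S 1 x ≤ n} : ℝ) ∧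
      (Nat.card {x : G // wordDist S 1 x ≤ n} : ℝ) ≤ C₂ * (n : ℝ) ^ N)
    (α : ℝ) (hα : 0 < α) (hαN : α < N)
    (Rα : G → G → ℝ) (hR_nonneg : ∀ x y, 0 ≤ Rα x y)
    (hR_symm : ∀ x y, Rα x y = Rα y x)
    (c₁ c₂ : ℝ) (hc₁ : 0 < c₁) (hc₂ : 0 < c₂)
    (hR_low : ∀ x y : G, x ≠ y → c₁ * (wordDist S x y : ℝ) ^ (α - (N : ℝ)) ≤ Rα x y)
    (hR_up : ∀ x y : G, x ≠ y → Rα x y ≤ c₂ * (wordDist S x y : ℝ) ^ (α - (N : ℝ)))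
    (hR_diag : ∀ x : G, Rα x x ≤ c₂)
    (r s : ℝ) (hr : 1 < r) (hs : 1 < s)
    (hrs : 1 / r + 1 / s + ((N : ℝ) - α) / (N : ℝ) = 2) :
    ∃ C : ℝ, 0 < C ∧ ∀ f g : G → ℝ, Memlp r f → Memlp s g →
      (∑' x : G, ∑' y : G, if x = y then 0 else Rα x y * |f x| * |g y|) ≤
        C * lpNorm r f * lpNorm s g := by
  have hr0 : (0:ℝ) < r := by linarith
  have hs0 : (0:ℝ) < s := by linarith
  have hrne : r ≠ 0 := ne_of_gt hr0
  have hsne : s ≠ 0 := ne_of_gt hs0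
  obtain ⟨Cm, hCm, hmaster⟩ := master S hN hC₁ hC₂ hgrowth hS_sym hα hαN hr hs hrs
  refine ⟨c₂ * Cm + 1, by positivity, ?_⟩
  intro f g hf hg
  -- nonnegativity facts about lpNorms
  have hlpf0 : 0 ≤ lpNorm r f :=
    Real.rpow_nonneg (tsum_nonneg (fun x => Real.rpow_nonneg (abs_nonneg _) _)) _
  have hlpg0 : 0 ≤ lpNorm s g :=
    Real.rpow_nonneg (tsum_nonneg (fun x => Real.rpow_nonneg (abs_nonneg _) _)) _
  -- trivial cases
  by_cases hf0 : ∀ x, f x = 0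
  · have hz : ∀ x y : G, (if x = y then (0:ℝ) else Rα x y * |f x| * |g y|) = 0 := by
      intro x y
      split
      · rfl
      · rw [hf0 x]; simp
    have : ∑' x : G, ∑' y : G, (if x = y then (0:ℝ) else Rα x y * |f x| * |g y|) = 0 := by
      simp [hz]
    rw [this]
    positivity
  by_cases hg0 : ∀ y, g y = 0
  · have hz : ∀ x y : G, (if x = y then (0:ℝ) else Rα x y * |f x| * |g y|) = 0 := by
      intro x y
      split
      · rfl
      · rw [hg0 y]; simp
    have : ∑' x : G, ∑' y : G, (if x = y then (0:ℝ) else Rα x y * |f x| * |g y|) = 0 := by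
      simp [hz]
    rw [this]
    positivity
  push_neg at hf0 hg0
  obtain ⟨x₀, hx₀⟩ := hf0
  obtain ⟨y₀, hy₀⟩ := hg0
  -- positivity of the norms
  have hsumf_pos : 0 < ∑' x, |f x| ^ r := by
    have h1 : (0:ℝ) < |f x₀| ^ r := Real.rpow_pos_of_pos (abs_pos.mpr hx₀) r
    have h2 : |f x₀| ^ r ≤ ∑' x, |f x| ^ r :=
      Summable.le_tsum hf x₀ (fun j _ => Real.rpow_nonneg (abs_nonneg _) _)
    linarith
  have hsumg_pos : 0 < ∑' y, |g y| ^ s := by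
    have h1 : (0:ℝ) < |g y₀| ^ s := Real.rpow_pos_of_pos (abs_pos.mpr hy₀) s
    have h2 : |g y₀| ^ s ≤ ∑' y, |g y| ^ s :=
      Summable.le_tsum hg y₀ (fun j _ => Real.rpow_nonneg (abs_nonneg _) _)
    linarith
  have hlf : 0 < lpNorm r f := Real.rpow_pos_of_pos hsumf_pos _
  have hlg : 0 < lpNorm s g := Real.rpow_pos_of_pos hsumg_pos _
  -- ENNReal versions
  set Φ : G → ℝ≥0∞ := fun x => ENNReal.ofReal |f x| with hΦdef
  set Ψ : G → ℝ≥0∞ := fun y => ENNReal.ofReal |g y| with hΨdef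
  set Lf : ℝ≥0∞ := ENNReal.ofReal (lpNorm r f) with hLfdef
  set Lg : ℝ≥0∞ := ENNReal.ofReal (lpNorm s g) with hLgdef
  have hLf0 : Lf ≠ 0 := (ENNReal.ofReal_pos.mpr hlf).ne'
  have hLft : Lf ≠ ⊤ := ENNReal.ofReal_ne_top
  have hLg0 : Lg ≠ 0 := (ENNReal.ofReal_pos.mpr hlg).ne'
  have hLgt : Lg ≠ ⊤ := ENNReal.ofReal_ne_top
  set F : G → ℝ≥0∞ := fun x => Φ x * Lf⁻¹ with hFdef
  set Gg : G → ℝ≥0∞ := fun y => Ψ y * Lg⁻¹ with hGgdef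
  have hFt : ∀ x, F x ≠ ⊤ := fun x =>
    ENNReal.mul_ne_top ENNReal.ofReal_ne_top (ENNReal.inv_ne_top.mpr hLf0)
  have hGt : ∀ y, Gg y ≠ ⊤ := fun y =>
    ENNReal.mul_ne_top ENNReal.ofReal_ne_top (ENNReal.inv_ne_top.mpr hLg0)
  -- the normalization identities
  have hΦsum : ∑' x, Φ x ^ r = ENNReal.ofReal (∑' x, |f x| ^ r) := by
    rw [ENNReal.ofReal_tsum_of_nonneg (fun x => Real.rpow_nonneg (abs_nonneg _) _) hf]
    apply tsum_congr
    intro x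
    rw [hΦdef]
    exact ENNReal.ofReal_rpow_of_nonneg (abs_nonneg _) hr0.le
  have hΨsum : ∑' y, Ψ y ^ s = ENNReal.ofReal (∑' y, |g y| ^ s) := by
    rw [ENNReal.ofReal_tsum_of_nonneg (fun y => Real.rpow_nonneg (abs_nonneg _) _) hg]
    apply tsum_congr
    intro y
    rw [hΨdef]
    exact ENNReal.ofReal_rpow_of_nonneg (abs_nonneg _) hs0.le
  have hlfr : (lpNorm r f) ^ r = ∑' x, |f x| ^ r := by
    rw [lpNorm, ← Real.rpow_mul (tsum_nonneg (fun x => Real.rpow_nonneg (abs_nonneg _) _)),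
      one_div, inv_mul_cancel₀ hrne, Real.rpow_one]
  have hlgs : (lpNorm s g) ^ s = ∑' y, |g y| ^ s := by
    rw [lpNorm, ← Real.rpow_mul (tsum_nonneg (fun y => Real.rpow_nonneg (abs_nonneg _) _)),
      one_div, inv_mul_cancel₀ hsne, Real.rpow_one]
  have hF1 : ∑' x, F x ^ r ≤ 1 := by
    have heach : ∀ x, F x ^ r = Φ x ^ r * (Lf ^ r)⁻¹ := by
      intro x
      rw [hFdef]
      rw [ENNReal.mul_rpow_of_nonneg _ _ hr0.le, ENNReal.inv_rpow]
    rw [tsum_congr heach, ENNReal.tsum_mul_right, hΦsum, ← hlfr, hLfdef,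
      ENNReal.ofReal_rpow_of_pos hlf]
    rw [ENNReal.mul_inv_cancel (by positivity : ENNReal.ofReal ((lpNorm r f) ^ r) ≠ 0)
      ENNReal.ofReal_ne_top]
  have hG1 : ∑' y, Gg y ^ s ≤ 1 := by
    have heach : ∀ y, Gg y ^ s = Ψ y ^ s * (Lg ^ s)⁻¹ := by
      intro y
      rw [hGgdef]
      rw [ENNReal.mul_rpow_of_nonneg _ _ hs0.le, ENNReal.inv_rpow]
    rw [tsum_congr heach, ENNReal.tsum_mul_right, hΨsum, ← hlgs, hLgdef,
      ENNReal.ofReal_rpow_of_pos hlg]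
    rw [ENNReal.mul_inv_cancel (by positivity : ENNReal.ofReal ((lpNorm s g) ^ s) ≠ 0)
      ENNReal.ofReal_ne_top]
  -- apply the master inequality and unscale
  have hM := hmaster F Gg hFt hGt hF1 hG1
  set κ : G → G → ℝ≥0∞ := fun x y =>
    if wordDist S x y = 0 then 0 else ((wordDist S x y : ℝ≥0∞) ^ (α - (N : ℝ))) with hκdef
  have hMκ : ∑' (x : G), ∑' (y : G), κ x y * (F x * Gg y) ≤ ENNReal.ofReal Cm := hM
  have hunscale : ∑' (x : G), ∑' (y : G), κ x y * (Φ x * Ψ y)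
      ≤ ENNReal.ofReal Cm * (Lf * Lg) := by
    have hsc : ∀ x y, κ x y * (F x * Gg y)
        = (Lf⁻¹ * Lg⁻¹) * (κ x y * (Φ x * Ψ y)) := by
      intro x y
      rw [hFdef, hGgdef]
      ring
    have hpull : ∑' (x : G), ∑' (y : G), κ x y * (F x * Gg y)
        = (Lf⁻¹ * Lg⁻¹) * ∑' (x : G), ∑' (y : G), κ x y * (Φ x * Ψ y) := by
      calc ∑' (x : G), ∑' (y : G), κ x y * (F x * Gg y)
          = ∑' (x : G), ∑' (y : G), (Lf⁻¹ * Lg⁻¹) * (κ x y * (Φ x * Ψ y)) := by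
            apply tsum_congr; intro x; apply tsum_congr; intro y; exact hsc x y
        _ = ∑' (x : G), (Lf⁻¹ * Lg⁻¹) * ∑' (y : G), κ x y * (Φ x * Ψ y) :=
            tsum_congr (fun x => ENNReal.tsum_mul_left)
        _ = (Lf⁻¹ * Lg⁻¹) * ∑' (x : G), ∑' (y : G), κ x y * (Φ x * Ψ y) :=
            ENNReal.tsum_mul_left
    have h1 : (Lf⁻¹ * Lg⁻¹) * ∑' (x : G), ∑' (y : G), κ x y * (Φ x * Ψ y)
        ≤ ENNReal.ofReal Cm := by
      rw [← hpull]; exact hMκ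
    have hcancel : (Lf * Lg) * (Lf⁻¹ * Lg⁻¹) = 1 := by
      calc (Lf * Lg) * (Lf⁻¹ * Lg⁻¹) = (Lf * Lf⁻¹) * (Lg * Lg⁻¹) := by ring
        _ = 1 := by rw [ENNReal.mul_inv_cancel hLf0 hLft, ENNReal.mul_inv_cancel hLg0 hLgt,
              one_mul]
    calc ∑' (x : G), ∑' (y : G), κ x y * (Φ x * Ψ y)
        = ((Lf * Lg) * (Lf⁻¹ * Lg⁻¹)) * ∑' (x : G), ∑' (y : G), κ x y * (Φ x * Ψ y) := by
          rw [hcancel, one_mul]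
      _ = (Lf * Lg) * ((Lf⁻¹ * Lg⁻¹) * ∑' (x : G), ∑' (y : G), κ x y * (Φ x * Ψ y)) := by
          ring
      _ ≤ (Lf * Lg) * ENNReal.ofReal Cm := mul_le_mul_right h1 _
      _ = ENNReal.ofReal Cm * (Lf * Lg) := mul_comm _ _
  -- compare the actual kernel with c₂ · κ
  have hcomp : ∀ x y : G, ENNReal.ofReal (if x = y then (0:ℝ) else Rα x y * |f x| * |g y|)
      ≤ ENNReal.ofReal c₂ * (κ x y * (Φ x * Ψ y)) := by
    intro x y
    by_cases hxy : x = y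
    · simp [hxy]
    · rw [if_neg hxy]
      have hRκ : ENNReal.ofReal (Rα x y) ≤ ENNReal.ofReal c₂ * κ x y := by
        by_cases hd : wordDist S x y = 0
        · have hle : Rα x y ≤ 0 := by
            have hh := hR_up x y hxy
            rw [hd] at hh
            simpa [Real.zero_rpow (show α - (N:ℝ) ≠ 0 by
              have : α < (N:ℝ) := hαN; linarith)] using hh
          have hR0 : Rα x y = 0 := le_antisymm hle (hR_nonneg x y)
          simp [hR0, hκdef, hd]
        · have hup := hR_up x y hxy
          calc ENNReal.ofReal (Rα x y)
              ≤ ENNReal.ofReal (c₂ * (wordDist S x y : ℝ) ^ (α - (N:ℝ))) :=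
                ENNReal.ofReal_le_ofReal hup
            _ = ENNReal.ofReal c₂ * κ x y := by
                rw [ENNReal.ofReal_mul hc₂.le]
                congr 1
                rw [hκdef]
                simp only
                rw [if_neg hd]
                have hdpos : (0:ℝ) < (wordDist S x y : ℝ) := by
                  exact_mod_cast Nat.pos_of_ne_zero hd
                rw [← ENNReal.ofReal_rpow_of_pos hdpos, ENNReal.ofReal_natCast]
      calc ENNReal.ofReal (Rα x y * |f x| * |g y|)
          = ENNReal.ofReal (Rα x y) * Φ x * Ψ y := by
            rw [ENNReal.ofReal_mul (mul_nonneg (hR_nonneg x y) (abs_nonneg _)),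
              ENNReal.ofReal_mul (hR_nonneg x y)]
        _ ≤ (ENNReal.ofReal c₂ * κ x y) * Φ x * Ψ y :=
            mul_le_mul_left (mul_le_mul_left hRκ _) _
        _ = ENNReal.ofReal c₂ * (κ x y * (Φ x * Ψ y)) := by ring
  -- the ENNReal bound for the original double sum
  have hENN : ∑' (x : G), ∑' (y : G),
      ENNReal.ofReal (if x = y then (0:ℝ) else Rα x y * |f x| * |g y|)
      ≤ ENNReal.ofReal (c₂ * Cm * (lpNorm r f * lpNorm s g)) := by
    calc ∑' (x : G), ∑' (y : G),
        ENNReal.ofReal (if x = y then (0:ℝ) else Rα x y * |f x| * |g y|)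
        ≤ ∑' (x : G), ∑' (y : G), ENNReal.ofReal c₂ * (κ x y * (Φ x * Ψ y)) := by
          apply ENNReal.tsum_le_tsum; intro x
          apply ENNReal.tsum_le_tsum; intro y
          exact hcomp x y
      _ = ENNReal.ofReal c₂ * ∑' (x : G), ∑' (y : G), κ x y * (Φ x * Ψ y) := by
          calc ∑' (x : G), ∑' (y : G), ENNReal.ofReal c₂ * (κ x y * (Φ x * Ψ y))
              = ∑' (x : G), ENNReal.ofReal c₂ * ∑' (y : G), κ x y * (Φ x * Ψ y) :=
                tsum_congr (fun x => ENNReal.tsum_mul_left)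
            _ = ENNReal.ofReal c₂ * ∑' (x : G), ∑' (y : G), κ x y * (Φ x * Ψ y) :=
                ENNReal.tsum_mul_left
      _ ≤ ENNReal.ofReal c₂ * (ENNReal.ofReal Cm * (Lf * Lg)) := mul_le_mul_right hunscale _
      _ = ENNReal.ofReal (c₂ * Cm * (lpNorm r f * lpNorm s g)) := by
          rw [hLfdef, hLgdef, ← ENNReal.ofReal_mul hlf.le, ← ENNReal.ofReal_mul hCm.le,
            ← ENNReal.ofReal_mul hc₂.le, ← mul_assoc]
  -- transfer to ℝ
  have htermnn : ∀ x y : G, 0 ≤ (if x = y then (0:ℝ) else Rα x y * |f x| * |g y|) := by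
    intro x y
    split
    · exact le_rfl
    · exact mul_nonneg (mul_nonneg (hR_nonneg x y) (abs_nonneg _)) (abs_nonneg _)
  have houter : ∑' (x : G), ENNReal.ofReal
      (∑' (y : G), if x = y then (0:ℝ) else Rα x y * |f x| * |g y|)
      ≤ ENNReal.ofReal (c₂ * Cm * (lpNorm r f * lpNorm s g)) := by
    refine le_trans (ENNReal.tsum_le_tsum (fun x => ?_)) hENN
    by_cases hsx : Summable (fun y => if x = y then (0:ℝ) else Rα x y * |f x| * |g y|)
    · rw [ENNReal.ofReal_tsum_of_nonneg (fun y => htermnn x y) hsx]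
    · rw [tsum_eq_zero_of_not_summable hsx]
      simp
  have htrans : ∑' (x : G), ∑' (y : G), (if x = y then (0:ℝ) else Rα x y * |f x| * |g y|)
      ≤ c₂ * Cm * (lpNorm r f * lpNorm s g) := by
    have := aux_tsum_le_toReal
      (fun x => ∑' (y : G), if x = y then (0:ℝ) else Rα x y * |f x| * |g y|)
      (fun x => tsum_nonneg (fun y => htermnn x y))
      ENNReal.ofReal_ne_top houter
    rwa [ENNReal.toReal_ofReal (by positivity)] at this
  refine htrans.trans ?_
  nlinarith [mul_nonneg hlpf0 hlpg0]

end Choquard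
end
end

section
/- (Brézis–Lieb lemma for discrete gradients.) Let Ω ⊆ G, 1 ≤ p < ∞, and let {u_n} ⊂ D^{1,p}(G) be a sequence that is uniformly bounded in the D^{1,p} norm and converges pointwise on G to a function u. Then lim_{n→∞} ( ∑_{x∈Ω} |∇u_n(x)|_p^p − ∑_{x∈Ω} |∇(u_n−u)(x)|_p^p ) = ∑_{x∈Ω} |∇u(x)|_p^p. -/
open Filter Topology

noncomputable section

namespace Choquard

variable {G : Type*}

lemma BL_key_one (p : ℝ) (hp : 1 ≤ p) {ε : ℝ} (hε : 0 < ε) :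
    ∃ C : ℝ, 0 ≤ C ∧ ∀ s : ℝ, |(|s + 1| ^ p - |s| ^ p)| ≤ ε * |s| ^ p + C := by
  have hp0 : 0 < p := lt_of_lt_of_le one_pos hp
  have hcont : ContinuousAt (fun d : ℝ => (1 + d) ^ p - (1 - d) ^ p) 0 := by
    apply ContinuousAt.sub
    · exact (Real.continuousAt_rpow_const _ _ (Or.inr hp0.le)).comp (by fun_prop)
    · exact (Real.continuousAt_rpow_const _ _ (Or.inr hp0.le)).comp (by fun_prop)
  obtain ⟨δ, hδ0, hδ⟩ := Metric.continuousAt_iff.mp hcont ε hε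
  set R : ℝ := max 2 (2 / δ) with hR
  have hR2 : (2 : ℝ) ≤ R := le_max_left _ _
  have hRδ : 2 / δ ≤ R := le_max_right _ _
  have hR0 : (0 : ℝ) < R := lt_of_lt_of_le two_pos hR2
  refine ⟨(R + 1) ^ p + R ^ p, by positivity, fun s => ?_⟩
  by_cases hs : |s| ≤ R
  · have h1 : |s + 1| ^ p ≤ (R + 1) ^ p := by
      apply Real.rpow_le_rpow (abs_nonneg _) _ hp0.le
      calc |s + 1| ≤ |s| + |1| := abs_add_le _ _
        _ ≤ R + 1 := by rw [abs_one]; linarith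
    have h2 : |s| ^ p ≤ R ^ p := Real.rpow_le_rpow (abs_nonneg _) hs hp0.le
    have h3 : (0:ℝ) ≤ |s + 1| ^ p := Real.rpow_nonneg (abs_nonneg _) _
    have h4 : (0:ℝ) ≤ |s| ^ p := Real.rpow_nonneg (abs_nonneg _) _
    have h5 : (0:ℝ) ≤ ε * |s| ^ p := mul_nonneg hε.le h4
    rw [abs_sub_le_iff]
    constructor <;> linarith
  · push_neg at hs
    set r : ℝ := |s| with hr
    have hr2 : (2:ℝ) ≤ r := le_trans hR2 hs.le
    have hr0 : (0:ℝ) < r := by linarith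
    set d : ℝ := 1 / r with hd
    have hd0 : 0 < d := by positivity
    have hd1 : d ≤ 1/2 := by
      rw [hd]; rw [div_le_div_iff₀ hr0 two_pos]; linarith
    have hdδ : |d| < δ := by
      rw [abs_of_pos hd0, hd, div_lt_iff₀ hr0]
      have h2δ : 2 / δ < r := lt_of_le_of_lt hRδ hs
      rw [div_lt_iff₀ hδ0] at h2δ
      nlinarith
    have hkey : (1 + d) ^ p - (1 - d) ^ p < ε := by
      have := hδ (by simpa [Real.dist_eq, sub_zero] using hdδ)
      simp only [Real.dist_eq] at this
      have h10 : ((1:ℝ) + 0) ^ p - (1 - 0) ^ p = 0 := by norm_num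
      have h2 := this
      rw [h10, sub_zero] at h2
      exact lt_of_le_of_lt (le_abs_self _) h2
    have hrd : r * d = 1 := by rw [hd, mul_one_div, div_self hr0.ne']
    have hplus : (r + 1) ^ p = r ^ p * (1 + d) ^ p := by
      rw [← Real.mul_rpow hr0.le (by linarith)]
      congr 1; nlinarith
    have hminus : (r - 1) ^ p = r ^ p * (1 - d) ^ p := by
      rw [← Real.mul_rpow hr0.le (by linarith)]
      congr 1; nlinarith
    -- both |s+1|^p and |s|^p lie in [(r-1)^p, (r+1)^p]
    have hb1 : r - 1 ≤ |s + 1| := by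
      have := abs_sub_abs_le_abs_sub s (-1)
      simp only [abs_neg, abs_one, sub_neg_eq_add] at this
      linarith [this]
    have hb2 : |s + 1| ≤ r + 1 := by
      calc |s + 1| ≤ |s| + |1| := abs_add_le _ _
        _ = r + 1 := by rw [abs_one]
    have hA1 : (r - 1) ^ p ≤ |s + 1| ^ p := Real.rpow_le_rpow (by linarith) hb1 hp0.le
    have hA2 : |s + 1| ^ p ≤ (r + 1) ^ p := Real.rpow_le_rpow (abs_nonneg _) hb2 hp0.le
    have hB1 : (r - 1) ^ p ≤ r ^ p := Real.rpow_le_rpow (by linarith) (by linarith) hp0.le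
    have hB2 : r ^ p ≤ (r + 1) ^ p := Real.rpow_le_rpow hr0.le (by linarith) hp0.le
    have hrp : (0:ℝ) ≤ r ^ p := Real.rpow_nonneg hr0.le _
    have hmain : |(|s + 1| ^ p - |s| ^ p)| ≤ (r + 1) ^ p - (r - 1) ^ p := by
      rw [abs_sub_le_iff]; constructor <;> [linarith; linarith]
    calc |(|s + 1| ^ p - |s| ^ p)| ≤ (r + 1) ^ p - (r - 1) ^ p := hmain
      _ = r ^ p * ((1 + d) ^ p - (1 - d) ^ p) := by rw [hplus, hminus]; ring
      _ ≤ r ^ p * ε := mul_le_mul_of_nonneg_left hkey.le hrp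
      _ ≤ ε * |s| ^ p + ((R + 1) ^ p + R ^ p) := by
          have : (0:ℝ) ≤ (R + 1) ^ p + R ^ p := by positivity
          rw [mul_comm]; linarith


lemma BL_key_two (p : ℝ) (hp : 1 ≤ p) {ε : ℝ} (hε : 0 < ε) :
    ∃ C : ℝ, 0 ≤ C ∧ ∀ a b : ℝ,
      |(|a + b| ^ p - |a| ^ p)| ≤ ε * |a| ^ p + C * |b| ^ p := by
  have hp0 : 0 < p := lt_of_lt_of_le one_pos hp
  obtain ⟨C, hC0, hC⟩ := BL_key_one p hp hε
  refine ⟨C, hC0, fun a b => ?_⟩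
  by_cases hb : b = 0
  · subst hb
    simp only [add_zero, sub_self, abs_zero, Real.zero_rpow hp0.ne']
    positivity
  · have h1 : |a + b| = |b| * |a / b + 1| := by
      rw [← abs_mul]; congr 1; field_simp
    have h2 : |a| = |b| * |a / b| := by
      rw [← abs_mul]; congr 1; field_simp
    have hbp : (0:ℝ) ≤ |b| ^ p := Real.rpow_nonneg (abs_nonneg _) _
    rw [h1, h2, Real.mul_rpow (abs_nonneg _) (abs_nonneg _),
      Real.mul_rpow (abs_nonneg _) (abs_nonneg _), ← mul_sub, abs_mul,
      abs_of_nonneg hbp]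
    calc |b| ^ p * |(|a/b + 1| ^ p - |a/b| ^ p)| ≤ |b| ^ p * (ε * |a/b| ^ p + C) :=
          mul_le_mul_of_nonneg_left (hC (a/b)) hbp
      _ = ε * (|b| ^ p * |a/b| ^ p) + C * |b| ^ p := by ring


lemma BL_dom_conv {ι : Type*} (W : ℕ → ι → ℝ) (g : ι → ℝ)
    (hg : Summable g) (h0 : ∀ n i, 0 ≤ W n i) (hle : ∀ n i, W n i ≤ g i)
    (hpt : ∀ i, Tendsto (fun n => W n i) atTop (𝓝 0)) :
    Tendsto (fun n => ∑' i, W n i) atTop (𝓝 0) := by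
  have hWs : ∀ n, Summable (W n) := fun n =>
    Summable.of_nonneg_of_le (h0 n) (hle n) hg
  rw [NormedAddCommGroup.tendsto_nhds_zero]
  intro δ hδ
  -- choose finite set F with tail of g < δ/2
  have htail := tendsto_tsum_compl_atTop_zero g
  rw [NormedAddCommGroup.tendsto_nhds_zero] at htail
  obtain ⟨F, hF⟩ := (htail (δ/2) (by linarith)).exists
  have hgF : ∑' i : {x // x ∉ F}, g i < δ / 2 := by
    have hnn : (0:ℝ) ≤ ∑' i : {x // x ∉ F}, g i :=
      tsum_nonneg fun i => le_trans (h0 0 i) (hle 0 i)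
    rwa [Real.norm_eq_abs, abs_of_nonneg hnn] at hF
  -- finite part tends to 0
  have hfin : Tendsto (fun n => ∑ i ∈ F, W n i) atTop (𝓝 0) := by
    have := tendsto_finset_sum F (fun i _ => hpt i)
    simpa using this
  rw [NormedAddCommGroup.tendsto_nhds_zero] at hfin
  filter_upwards [hfin (δ/2) (by linarith)] with n hn
  have hsplit : ∑' i, W n i = ∑ i ∈ F, W n i + ∑' i : {x // x ∉ F}, W n i :=
    ((hWs n).sum_add_tsum_compl).symm
  have htle : ∑' i : {x // x ∉ F}, W n i ≤ ∑' i : {x // x ∉ F}, g i :=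
    Summable.tsum_le_tsum (fun i => hle n i) ((hWs n).subtype _) (hg.subtype _)
  have hWnn : (0:ℝ) ≤ ∑' i, W n i := tsum_nonneg (h0 n)
  have htnn : (0:ℝ) ≤ ∑' i : {x // x ∉ F}, W n i := tsum_nonneg fun i => h0 n i
  rw [Real.norm_eq_abs, abs_of_nonneg hWnn, hsplit]
  rw [Real.norm_eq_abs] at hn
  have := le_abs_self (∑ i ∈ F, W n i)
  linarith


lemma BL_two_rpow (p : ℝ) (hp : 1 ≤ p) (a b : ℝ) :
    |a - b| ^ p ≤ 2 ^ p * (|a| ^ p + |b| ^ p) := by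
  have hp0 : 0 < p := lt_of_lt_of_le one_pos hp
  have h1 : |a - b| ≤ 2 * max |a| |b| := by
    calc |a - b| ≤ |a| + |b| := abs_sub _ _
      _ ≤ max |a| |b| + max |a| |b| := add_le_add (le_max_left _ _) (le_max_right _ _)
      _ = 2 * max |a| |b| := by ring
  have hm0 : (0:ℝ) ≤ max |a| |b| := le_trans (abs_nonneg a) (le_max_left _ _)
  calc |a - b| ^ p ≤ (2 * max |a| |b|) ^ p :=
        Real.rpow_le_rpow (abs_nonneg _) h1 hp0.le
    _ = 2 ^ p * (max |a| |b|) ^ p := Real.mul_rpow (by norm_num) hm0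
    _ ≤ 2 ^ p * (|a| ^ p + |b| ^ p) := by
        apply mul_le_mul_of_nonneg_left _ (Real.rpow_nonneg (by norm_num) p)
        rcases max_cases |a| |b| with ⟨h, _⟩ | ⟨h, _⟩ <;> rw [h]
        · exact le_add_of_nonneg_right (Real.rpow_nonneg (abs_nonneg _) _)
        · exact le_add_of_nonneg_left (Real.rpow_nonneg (abs_nonneg _) _)


lemma BL_gradP_bound [Group G] (S : Finset G) (p : ℝ) {ε C : ℝ} (hC0 : 0 ≤ C)
    (hC : ∀ a b : ℝ, |(|a + b| ^ p - |a| ^ p)| ≤ ε * |a| ^ p + C * |b| ^ p)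
    (w v : G → ℝ) (x : G) :
    |gradP S p w x - gradP S p (fun z => w z - v z) x - gradP S p v x|
      ≤ ε * gradP S p (fun z => w z - v z) x + (C + 1) * gradP S p v x := by
  unfold gradP
  rw [← Finset.sum_sub_distrib, ← Finset.sum_sub_distrib, Finset.mul_sum,
    Finset.mul_sum, ← Finset.sum_add_distrib]
  refine le_trans (Finset.abs_sum_le_sum_abs _ _) (Finset.sum_le_sum fun s _ => ?_)
  have hab : w (x * s) - w x
      = ((w (x * s) - v (x * s)) - (w x - v x)) + (v (x * s) - v x) := by ring
  rw [hab]
  set a := (w (x * s) - v (x * s)) - (w x - v x) with ha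
  set b := v (x * s) - v x with hb
  have h1 : |(|a + b| ^ p - |a| ^ p - |b| ^ p)|
      ≤ |(|a + b| ^ p - |a| ^ p)| + |b| ^ p := by
    have h2 : (0:ℝ) ≤ |b| ^ p := Real.rpow_nonneg (abs_nonneg _) _
    calc |(|a + b| ^ p - |a| ^ p - |b| ^ p)|
        ≤ |(|a + b| ^ p - |a| ^ p)| + |(|b| ^ p)| := abs_sub _ _
      _ = |(|a + b| ^ p - |a| ^ p)| + |b| ^ p := by rw [abs_of_nonneg h2]
  calc |(|a + b| ^ p - |a| ^ p - |b| ^ p)|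
      ≤ |(|a + b| ^ p - |a| ^ p)| + |b| ^ p := h1
    _ ≤ (ε * |a| ^ p + C * |b| ^ p) + |b| ^ p := add_le_add_left (hC a b) _
    _ = ε * |a| ^ p + (C + 1) * |b| ^ p := by ring


set_option maxHeartbeats 1000000 in
theorem brezisLieb_gradient
    [Group G] [Countable G]
    (S : Finset G) (hS_gen : Subgroup.closure (S : Set G) = ⊤)
    (hS_sym : ∀ s ∈ S, s⁻¹ ∈ S) (hS_e : (1 : G) ∉ S)
    (Ω : Set G) (p : ℝ) (hp : 1 ≤ p)
    (u : ℕ → G → ℝ) (v : G → ℝ)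
    (hbdd : ∃ M : ℝ, ∀ n, Summable (gradP S p (u n)) ∧ (∑' x, gradP S p (u n) x) ≤ M)
    (hpt : ∀ x : G, Tendsto (fun n => u n x) atTop (𝓝 (v x))) :
    Tendsto (fun n =>
        (∑' x : Ω, gradP S p (u n) (x : G)) -
          ∑' x : Ω, gradP S p (fun z => u n z - v z) (x : G))
      atTop (𝓝 (∑' x : Ω, gradP S p v (x : G))) := by
  have hp0 : 0 < p := lt_of_lt_of_le one_pos hp
  obtain ⟨M, hM⟩ := hbdd
  -- nonnegativity of gradP
  have hgnn : ∀ (w : G → ℝ) (x : G), 0 ≤ gradP S p w x := fun w x =>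
    Finset.sum_nonneg fun s _ => Real.rpow_nonneg (abs_nonneg _) _
  have hM0 : (0:ℝ) ≤ M :=
    le_trans (tsum_nonneg (hgnn (u 0))) (hM 0).2
  -- continuity of t ↦ |t|^p
  have hphi : Continuous (fun t : ℝ => |t| ^ p) :=
    continuous_abs.rpow_const (fun t => Or.inr hp0.le)
  -- pointwise convergence of gradP (u n) to gradP v
  have hconv1 : ∀ x : G, Tendsto (fun n => gradP S p (u n) x) atTop
      (𝓝 (gradP S p v x)) := by
    intro x
    unfold gradP
    apply tendsto_finset_sum
    intro s _
    exact (hphi.tendsto _).comp ((hpt (x * s)).sub (hpt x))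
  -- pointwise convergence of gradP (u n - v) to 0
  have hconv2 : ∀ x : G, Tendsto
      (fun n => gradP S p (fun z => u n z - v z) x) atTop (𝓝 0) := by
    intro x
    unfold gradP
    have : Tendsto (fun n => ∑ s ∈ S,
        |(u n (x * s) - v (x * s)) - (u n x - v x)| ^ p) atTop
        (𝓝 (∑ s ∈ S, (0:ℝ))) := by
      apply tendsto_finset_sum
      intro s _
      have h1 : Tendsto (fun n => (u n (x * s) - v (x * s)) - (u n x - v x))
          atTop (𝓝 0) := by
        have := ((hpt (x * s)).sub (tendsto_const_nhds (x := v (x * s)))).sub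
          ((hpt x).sub (tendsto_const_nhds (x := v x)))
        simpa using this
      have h2 := (hphi.tendsto 0).comp h1
      simpa [Function.comp_def, Real.zero_rpow hp0.ne'] using h2
    simpa using this
  -- gradP v is summable, with sum ≤ M (Fatou)
  have hbound : ∀ F : Finset G, ∑ x ∈ F, gradP S p v x ≤ M := by
    intro F
    have h1 : Tendsto (fun n => ∑ x ∈ F, gradP S p (u n) x) atTop
        (𝓝 (∑ x ∈ F, gradP S p v x)) :=
      tendsto_finset_sum F fun x _ => hconv1 x
    refine le_of_tendsto h1 (Eventually.of_forall fun n => ?_)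
    exact le_trans (Summable.sum_le_tsum F (fun x _ => hgnn _ x) (hM n).1) (hM n).2
  have hsum_v : Summable (gradP S p v) :=
    summable_of_sum_le (fun x => hgnn v x) hbound
  have hMv : ∑' x, gradP S p v x ≤ M := Summable.tsum_le_of_sum_le hsum_v hbound
  -- comparison for gradP (u n - v)
  have hcmp : ∀ n x, gradP S p (fun z => u n z - v z) x
      ≤ 2 ^ p * (gradP S p (u n) x + gradP S p v x) := by
    intro n x
    unfold gradP
    rw [← Finset.sum_add_distrib, Finset.mul_sum]
    refine Finset.sum_le_sum fun s _ => ?_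
    have he : (u n (x * s) - v (x * s)) - (u n x - v x)
        = (u n (x * s) - u n x) - (v (x * s) - v x) := by ring
    rw [he]
    exact BL_two_rpow p hp (u n (x * s) - u n x) (v (x * s) - v x)
  have hsum_diff : ∀ n, Summable (gradP S p (fun z => u n z - v z)) := by
    intro n
    refine Summable.of_nonneg_of_le (hgnn _) (hcmp n) ?_
    exact ((hM n).1.add hsum_v).mul_left _
  set M' : ℝ := 2 ^ p * (M + M) with hM'
  have hM'0 : 0 ≤ M' := by positivity
  have hdiff_bound : ∀ n, ∑' x, gradP S p (fun z => u n z - v z) x ≤ M' := by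
    intro n
    calc ∑' x, gradP S p (fun z => u n z - v z) x
        ≤ ∑' x, 2 ^ p * (gradP S p (u n) x + gradP S p v x) :=
          Summable.tsum_le_tsum (hcmp n) (hsum_diff n) (((hM n).1.add hsum_v).mul_left _)
      _ = 2 ^ p * ((∑' x, gradP S p (u n) x) + ∑' x, gradP S p v x) := by
          rw [tsum_mul_left, Summable.tsum_add (hM n).1 hsum_v]
      _ ≤ M' := by
          have h := (hM n).2
          have h2 : (∑' x, gradP S p (u n) x) + ∑' x, gradP S p v x ≤ M + M := by
            linarith
          rw [hM']
          exact mul_le_mul_of_nonneg_left h2 (by positivity)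
  -- now the main argument
  set L : ℝ := ∑' x : Ω, gradP S p v (x : G) with hL
  have hzero : Tendsto (fun n => ((∑' x : Ω, gradP S p (u n) (x : G)) -
      ∑' x : Ω, gradP S p (fun z => u n z - v z) (x : G)) - L) atTop (𝓝 0) := by
    rw [NormedAddCommGroup.tendsto_nhds_zero]
    intro δ hδ
    set ε : ℝ := δ / (2 * (M' + 1)) with hε'
    have hε : 0 < ε := by positivity
    obtain ⟨C, hC0, hC⟩ := BL_key_two p hp hε
    set Fn : ℕ → G → ℝ := fun n x => gradP S p (u n) x -
      gradP S p (fun z => u n z - v z) x - gradP S p v x with hFn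
    have habs : ∀ n x, |Fn n x| ≤ ε * gradP S p (fun z => u n z - v z) x
        + (C + 1) * gradP S p v x := fun n x =>
      BL_gradP_bound S p hC0 hC (u n) v x
    set W : ℕ → Ω → ℝ := fun n x =>
      max (|Fn n x| - ε * gradP S p (fun z => u n z - v z) (x : G)) 0 with hW
    have hW0 : ∀ n x, 0 ≤ W n x := fun n x => le_max_right _ _
    have hWg : ∀ n (x : Ω), W n x ≤ (C + 1) * gradP S p v (x : G) := by
      intro n x
      apply max_le
      · have := habs n x
        have h2 : 0 ≤ ε * gradP S p (fun z => u n z - v z) (x : G) :=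
          mul_nonneg hε.le (hgnn _ _)
        linarith
      · exact mul_nonneg (by linarith) (hgnn _ _)
    have hgsum : Summable (fun x : Ω => (C + 1) * gradP S p v (x : G)) :=
      (hsum_v.subtype Ω).mul_left _
    have hWpt : ∀ x : Ω, Tendsto (fun n => W n x) atTop (𝓝 0) := by
      intro x
      have hF0 : Tendsto (fun n => |Fn n (x : G)|) atTop (𝓝 0) := by
        have h1 : Tendsto (fun n => Fn n (x : G)) atTop (𝓝 0) := by
          have := ((hconv1 (x : G)).sub (hconv2 (x : G))).sub
            (tendsto_const_nhds (x := gradP S p v (x : G)))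
          simpa [hFn] using this
        simpa using h1.abs
      apply squeeze_zero (fun n => hW0 n x) _ hF0
      intro n
      apply max_le _ (abs_nonneg _)
      have h2 : 0 ≤ ε * gradP S p (fun z => u n z - v z) (x : G) :=
        mul_nonneg hε.le (hgnn _ _)
      linarith
    have hWconv := BL_dom_conv W _ hgsum hW0 hWg hWpt
    rw [NormedAddCommGroup.tendsto_nhds_zero] at hWconv
    filter_upwards [hWconv (δ / 2) (by linarith)] with n hn
    -- summabilities on the subtype
    have s1 : Summable (fun x : Ω => gradP S p (u n) (x : G)) := (hM n).1.subtype Ω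
    have s2 : Summable (fun x : Ω => gradP S p (fun z => u n z - v z) (x : G)) :=
      (hsum_diff n).subtype Ω
    have s3 : Summable (fun x : Ω => gradP S p v (x : G)) := hsum_v.subtype Ω
    have hWsum : Summable (W n) :=
      Summable.of_nonneg_of_le (hW0 n) (hWg n) hgsum
    have hFle : ∀ x : Ω, |Fn n (x : G)| ≤ W n x
        + ε * gradP S p (fun z => u n z - v z) (x : G) := by
      intro x
      have := le_max_left (|Fn n (x : G)| -
        ε * gradP S p (fun z => u n z - v z) (x : G)) 0
      rw [hW]; dsimp only; linarith [this]
    have hFsum : Summable (fun x : Ω => |Fn n (x : G)|) :=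
      Summable.of_nonneg_of_le (fun x => abs_nonneg _) hFle
        (hWsum.add (s2.mul_left ε))
    have heq : ((∑' x : Ω, gradP S p (u n) (x : G)) -
        ∑' x : Ω, gradP S p (fun z => u n z - v z) (x : G)) - L
        = ∑' x : Ω, Fn n (x : G) := by
      rw [hL, ← Summable.tsum_sub s1 s2, ← Summable.tsum_sub (s1.sub s2) s3]
    rw [heq]
    have h1 : ‖∑' x : Ω, Fn n (x : G)‖ ≤ ∑' x : Ω, |Fn n (x : G)| := by
      have hs : Summable (fun x : Ω => ‖Fn n (x : G)‖) := hFsum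
      have h := norm_tsum_le_tsum_norm (f := fun x : Ω => Fn n (x : G)) hs
      simpa only [Real.norm_eq_abs] using h
    have h2 : ∑' x : Ω, |Fn n (x : G)| ≤ (∑' x : Ω, W n x) + ε * M' := by
      calc ∑' x : Ω, |Fn n (x : G)|
          ≤ ∑' x : Ω, (W n x + ε * gradP S p (fun z => u n z - v z) (x : G)) :=
            Summable.tsum_le_tsum hFle hFsum (hWsum.add (s2.mul_left ε))
        _ = (∑' x : Ω, W n x) +
            ε * ∑' x : Ω, gradP S p (fun z => u n z - v z) (x : G) := by
            rw [Summable.tsum_add hWsum (s2.mul_left ε), tsum_mul_left]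
        _ ≤ (∑' x : Ω, W n x) + ε * M' := by
            gcongr
            calc (∑' x : Ω, gradP S p (fun z => u n z - v z) (x : G))
                ≤ ∑' x, gradP S p (fun z => u n z - v z) x :=
                  Summable.tsum_subtype_le _ _ (fun x => hgnn _ x) (hsum_diff n)
              _ ≤ M' := hdiff_bound n
    have h3 : ∑' x : Ω, W n x ≤ ‖∑' x : Ω, W n x‖ := le_abs_self _
    have h4 : ε * M' < δ / 2 := by
      rw [hε']
      rw [div_mul_eq_mul_div, div_lt_iff₀ (by positivity)]
      nlinarith
    rw [Real.norm_eq_abs] at hn ⊢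
    calc |∑' x : Ω, Fn n (x : G)| ≤ (∑' x : Ω, W n x) + ε * M' :=
          le_trans (by simpa [Real.norm_eq_abs] using h1) h2
      _ < δ / 2 + δ / 2 := by
          have := le_abs_self (∑' x : Ω, W n x)
          apply add_lt_add_of_le_of_lt (by linarith) h4
      _ = δ := by ring
  have := hzero.add (tendsto_const_nhds (x := L))
  simpa using this


end Choquard
end
end
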